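/- arXiv:1009.2271 — 3 statements merged into one kernel-verified Lean document; each statement's English description precedes it below -/
import Mathlib

section
/- Let n = p + q ≥ 3. The set of conformal Killing vector fields of the flat metric η on ℝⁿ is a real vector subspace of the space of smooth vector fields that is closed under the Lie bracket of vector fields [X,Y]ⁱ = Σ_j (X^j ∂_j Yⁱ − Y^j ∂_j Xⁱ), and its dimension equals (n+1)(n+2)/2. -/
open Matrix BigOperators

noncomputable section

/-- The partial derivative `∂_j f (x)` of a function on `ℝⁿ`. -/
def pd {n : ℕ} (f : (Fin n → ℝ) → ℝ) (j : Fin n) (x : Fin n → ℝ) : ℝ :=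
  fderiv ℝ f x (Pi.single j 1)

/-- Entries of the flat diagonal metric `η = diag(1,…,1,−1,…,−1)` with `p` entries `+1`. -/
def etaSign (p : ℕ) {n : ℕ} (i : Fin n) : ℝ := if (i : ℕ) < p then 1 else -1

/-- The divergence `Σ_k ∂_k X^k` of a vector field on `ℝⁿ`. -/
def divg {n : ℕ} (X : (Fin n → ℝ) → Fin n → ℝ) (x : Fin n → ℝ) : ℝ :=
  ∑ k, pd (fun y => X y k) k x

/-- `X` is a conformal Killing vector field for the flat metric of signature `(p, n−p)`:
`∂ᵢX_j + ∂_jXᵢ = (2/n)(Σ_k ∂_k X^k) η_{ij}` where `X_j = η_{jj} X^j`. -/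
def ConformalKilling (p : ℕ) {n : ℕ} (X : (Fin n → ℝ) → Fin n → ℝ) : Prop :=
  ∀ (x : Fin n → ℝ) (i j : Fin n),
    etaSign p j * pd (fun y => X y j) i x + etaSign p i * pd (fun y => X y i) j x
      = (2 / (n : ℝ)) * divg X x * (if i = j then etaSign p i else 0)

/-- The Lie bracket of vector fields `[X,Y]ⁱ = Σ_j (X^j ∂_j Yⁱ − Y^j ∂_j Xⁱ)`. -/
def lieBracketVF {n : ℕ} (X Y : (Fin n → ℝ) → Fin n → ℝ) : (Fin n → ℝ) → Fin n → ℝ :=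
  fun x i => ∑ j, (X x j * pd (fun y => Y y i) j x - Y x j * pd (fun y => X y i) j x)

set_option linter.unnecessarySeqFocus false
set_option maxHeartbeats 1000000 in
section
namespace CKAux
variable {n : ℕ}

lemma pd_add {f g : (Fin n → ℝ) → ℝ} {x} (hf : DifferentiableAt ℝ f x)
    (hg : DifferentiableAt ℝ g x) (j : Fin n) :
    pd (fun y => f y + g y) j x = pd f j x + pd g j x := by
  unfold pd
  rw [fderiv_fun_add hf hg]; rfl

lemma pd_sub {f g : (Fin n → ℝ) → ℝ} {x} (hf : DifferentiableAt ℝ f x)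
    (hg : DifferentiableAt ℝ g x) (j : Fin n) :
    pd (fun y => f y - g y) j x = pd f j x - pd g j x := by
  unfold pd
  rw [fderiv_fun_sub hf hg]; rfl

lemma pd_const_mul {f : (Fin n → ℝ) → ℝ} {x} (hf : DifferentiableAt ℝ f x) (c : ℝ) (j : Fin n) :
    pd (fun y => c * f y) j x = c * pd f j x := by
  unfold pd
  rw [fderiv_const_mul hf]; rfl

lemma pd_mul {f g : (Fin n → ℝ) → ℝ} {x} (hf : DifferentiableAt ℝ f x)
    (hg : DifferentiableAt ℝ g x) (j : Fin n) :
    pd (fun y => f y * g y) j x = f x * pd g j x + g x * pd f j x := by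
  unfold pd
  rw [fderiv_fun_mul hf hg]
  simp [mul_comm]

lemma pd_const (c : ℝ) (j : Fin n) (x : Fin n → ℝ) : pd (fun _ => c) j x = 0 := by
  unfold pd
  rw [fderiv_fun_const]; rfl

lemma pd_sum {ι : Type*} (s : Finset ι) {f : ι → (Fin n → ℝ) → ℝ} {x}
    (hf : ∀ i ∈ s, DifferentiableAt ℝ (f i) x) (j : Fin n) :
    pd (fun y => ∑ i ∈ s, f i y) j x = ∑ i ∈ s, pd (f i) j x := by
  unfold pd
  rw [fderiv_fun_sum hf]; simp

lemma pd_coord (i j : Fin n) (x : Fin n → ℝ) :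
    pd (fun y => y i) j x = if j = i then 1 else 0 := by
  have : (fun y : Fin n → ℝ => y i) = (ContinuousLinearMap.proj i : (Fin n → ℝ) →L[ℝ] ℝ) := rfl
  unfold pd
  rw [this, ContinuousLinearMap.fderiv]
  simp [ContinuousLinearMap.proj_apply, Pi.single_apply, eq_comm]

lemma pd_contDiff {f : (Fin n → ℝ) → ℝ} (hf : ContDiff ℝ (⊤:ℕ∞) f) (j : Fin n) :
    ContDiff ℝ (⊤:ℕ∞) (fun x => pd f j x) :=
  (hf.fderiv_right (mod_cast le_top)).clm_apply contDiff_const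

lemma contDiff_coord (i : Fin n) : ContDiff ℝ (⊤:ℕ∞) (fun y : Fin n → ℝ => y i) :=
  (ContinuousLinearMap.proj i : (Fin n → ℝ) →L[ℝ] ℝ).contDiff

lemma pd_comm {f : (Fin n → ℝ) → ℝ} (hf : ContDiff ℝ (⊤:ℕ∞) f) (i j : Fin n) (x : Fin n → ℝ) :
    pd (fun y => pd f j y) i x = pd (fun y => pd f i y) j x := by
  have hdf : Differentiable ℝ f := hf.differentiable (by simp)
  have hdf' : Differentiable ℝ (fderiv ℝ f) := (hf.fderiv_right (m := (⊤:ℕ∞)) (mod_cast le_top)).differentiable (by simp)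
  have key : ∀ v w : Fin n → ℝ, fderiv ℝ (fderiv ℝ f) x v w = fderiv ℝ (fderiv ℝ f) x w v :=
    second_derivative_symmetric (fun y => (hdf y).hasFDerivAt) (hdf' x).hasFDerivAt
  have expand : ∀ u v : Fin n → ℝ,
      fderiv ℝ (fun y => fderiv ℝ f y v) x u = fderiv ℝ (fderiv ℝ f) x u v := by
    intro u v
    rw [fderiv_clm_apply (hdf' x) (differentiableAt_const v)]
    simp
  show pd (fun y => fderiv ℝ f y (Pi.single j 1)) i x = _
  unfold pd
  rw [expand, key, ← expand]

lemma fderiv_eq_sum_pd {f : (Fin n → ℝ) → ℝ} (x v : Fin n → ℝ) :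
    fderiv ℝ f x v = ∑ i, v i * pd f i x := by
  unfold pd
  conv_lhs => rw [← Finset.univ_sum_single v]
  rw [map_sum]
  congr 1; ext i
  have : Pi.single i (v i) = v i • (Pi.single i 1 : Fin n → ℝ) := by
    rw [← Pi.single_smul]; norm_num
  rw [this, _root_.map_smul]; rfl

lemma const_of_pd_zero {f : (Fin n → ℝ) → ℝ} (hf : Differentiable ℝ f)
    (h : ∀ i x, pd f i x = 0) (x : Fin n → ℝ) : f x = f 0 := by
  apply is_const_of_fderiv_eq_zero hf
  intro y
  ext v
  rw [ContinuousLinearMap.zero_apply, fderiv_eq_sum_pd]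
  simp [h]

-- NEW PART 2
lemma contDiff_linear (c : Fin n → ℝ) :
    ContDiff ℝ (⊤:ℕ∞) (fun x : Fin n → ℝ => ∑ j, c j * x j) :=
  ContDiff.sum fun j _ => contDiff_const.mul (contDiff_coord j)

lemma contDiff_quad (c : Fin n → Fin n → ℝ) :
    ContDiff ℝ (⊤:ℕ∞) (fun x : Fin n → ℝ => ∑ i, ∑ j, c i j * x i * x j) :=
  ContDiff.sum fun i _ => ContDiff.sum fun j _ =>
    (contDiff_const.mul (contDiff_coord i)).mul (contDiff_coord j)

lemma diffAt_coord (i : Fin n) (x : Fin n → ℝ) :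
    DifferentiableAt ℝ (fun y : Fin n → ℝ => y i) x :=
  ((contDiff_coord i).differentiable (by simp)).differentiableAt

lemma pd_linear (c : Fin n → ℝ) (k : Fin n) (x : Fin n → ℝ) :
    pd (fun y => ∑ j, c j * y j) k x = c k := by
  rw [pd_sum _ (fun j _ => (differentiableAt_const (c j)).fun_mul (diffAt_coord j x)) k]
  simp [pd_const_mul (diffAt_coord _ x), pd_coord]

lemma pd_quad (c : Fin n → Fin n → ℝ) (hc : ∀ i j, c i j = c j i) (k : Fin n) (x : Fin n → ℝ) :
    pd (fun y => ∑ i, ∑ j, c i j * y i * y j) k x = 2 * ∑ i, c i k * x i := by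
  have hterm : ∀ i j : Fin n, DifferentiableAt ℝ (fun y : Fin n → ℝ => c i j * y i * y j) x :=
    fun i j => (((differentiableAt_const _).mul (diffAt_coord i x)).mul (diffAt_coord j x))
  rw [pd_sum _ (fun i _ => DifferentiableAt.fun_sum (fun j _ => hterm i j)) k]
  have key : ∀ i : Fin n, pd (fun y => ∑ j, c i j * y i * y j) k x
      = (if k = i then ∑ j, c i j * x j else 0) + c i k * x i := by
    intro i
    rw [pd_sum _ (fun j _ => hterm i j) k]
    have hj : ∀ j : Fin n, pd (fun y => c i j * y i * y j) k x
        = c i j * (if k = i then x j else 0) + c i j * (if k = j then x i else 0) := by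
      intro j
      have h1 : (fun y : Fin n → ℝ => c i j * y i * y j)
          = fun y : Fin n → ℝ => c i j * (y i * y j) := by funext y; ring
      rw [h1, pd_const_mul ((diffAt_coord i x).fun_mul (diffAt_coord j x)),
        pd_mul (diffAt_coord i x) (diffAt_coord j x), pd_coord, pd_coord]
      by_cases h : k = i <;> by_cases h' : k = j <;> subst_vars <;> (try split_ifs) <;>
        (try simp_all) <;> ring
    rw [Finset.sum_congr rfl (fun j _ => hj j), Finset.sum_add_distrib]
    congr 1
    · by_cases h : k = i <;> simp [h, Finset.mul_sum]
    · simp [mul_ite, mul_zero, Finset.sum_ite_eq]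
  rw [Finset.sum_congr rfl (fun i _ => key i), Finset.sum_add_distrib, Finset.sum_ite_eq]
  simp only [Finset.mem_univ, if_true]
  rw [show ∑ j, c k j * x j = ∑ j, c j k * x j from
    Finset.sum_congr rfl (fun j _ => by rw [hc])]
  ring

lemma affine_of_pd_const {f : (Fin n → ℝ) → ℝ} (hf : ContDiff ℝ (⊤:ℕ∞) f)
    (hc : ∀ j x, pd f j x = pd f j 0) (x : Fin n → ℝ) :
    f x = f 0 + ∑ j, pd f j 0 * x j := by
  have hdf := hf.differentiable (by simp)
  have hdl := (contDiff_linear (fun j => pd f j 0)).differentiable (by simp)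
  have h0 : ∀ i y, pd (fun y => f y - ∑ j, pd f j 0 * y j) i y = 0 := by
    intro i y
    rw [pd_sub (hdf y) (hdl y), pd_linear, hc]; ring
  have := const_of_pd_zero (hdf.fun_sub hdl) h0 x
  simp only [Pi.zero_apply, mul_zero, Finset.sum_const_zero, sub_zero] at this
  linarith

lemma quadratic_of_pd3_zero {f : (Fin n → ℝ) → ℝ} (hf : ContDiff ℝ (⊤:ℕ∞) f)
    (h3 : ∀ i j k x, pd (fun y => pd (fun z => pd f k z) j y) i x = 0) (x : Fin n → ℝ) :
    f x = f 0 + ∑ j, pd f j 0 * x j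
      + (1/2) * ∑ i, ∑ j, pd (fun y => pd f j y) i 0 * x i * x j := by
  set c : Fin n → Fin n → ℝ := fun i j => pd (fun y => pd f j y) i 0 with hcdef
  show f x = f 0 + (∑ j, pd f j 0 * x j) + (1/2) * ∑ i, ∑ j, c i j * x i * x j
  have hcsym : ∀ i j, c i j = c j i := fun i j => pd_comm hf i j 0
  have h2const : ∀ i j y, pd (fun z => pd f j z) i y = c i j := fun i j y =>
    const_of_pd_zero ((pd_contDiff (pd_contDiff hf j) i).differentiable (by simp))
      (fun l z => h3 l i j z) y
  have h1aff : ∀ j y, pd f j y = pd f j 0 + ∑ i, c i j * y i := by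
    intro j y
    have := affine_of_pd_const (pd_contDiff hf j)
      (fun i z => by rw [h2const i j z, h2const i j 0]) y
    simpa using this
  have hq : ContDiff ℝ (⊤:ℕ∞) (fun y : Fin n → ℝ => (1/2) * ∑ i, ∑ j, c i j * y i * y j) :=
    contDiff_const.mul (contDiff_quad c)
  set g : (Fin n → ℝ) → ℝ := fun y => f y - (1/2) * ∑ i, ∑ j, c i j * y i * y j with hgdef
  have hg : ContDiff ℝ (⊤:ℕ∞) g := hf.sub hq
  have hdf := hf.differentiable (by simp)
  have hdq := hq.differentiable (by simp)
  have hpg : ∀ k y, pd g k y = pd f k 0 := by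
    intro k y
    rw [hgdef]
    rw [pd_sub (hdf y) (hdq y), pd_const_mul ((contDiff_quad c).differentiable (by simp) y),
      pd_quad c hcsym, h1aff k y]
    ring
  have key := affine_of_pd_const hg (fun k y => by rw [hpg k y, hpg k 0]) x
  have e1 : g x = f x - (1/2) * ∑ i, ∑ j, c i j * x i * x j := rfl
  have e2 : g 0 = f 0 := by
    show f 0 - _ = f 0
    simp
  rw [e1, e2] at key
  simp only [hpg] at key
  linarith [key]
-- PART 3
variable (p : ℕ)

def eta (p : ℕ) {n : ℕ} (i j : Fin n) : ℝ := if i = j then etaSign p i else 0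
def Xl (p : ℕ) {n : ℕ} (X : (Fin n → ℝ) → Fin n → ℝ) (k : Fin n) : (Fin n → ℝ) → ℝ :=
  fun y => etaSign p k * X y k
def phi {n : ℕ} (X : (Fin n → ℝ) → Fin n → ℝ) : (Fin n → ℝ) → ℝ :=
  fun x => (2/(n:ℝ)) * divg X x

lemma etaSign_sq (i : Fin n) : etaSign p i * etaSign p i = 1 := by
  unfold etaSign; split_ifs <;> norm_num

lemma etaSign_ne_zero (i : Fin n) : etaSign p i ≠ 0 := by
  unfold etaSign; split_ifs <;> norm_num

lemma eta_diag (i : Fin n) : eta p i i = etaSign p i := by simp [eta]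

lemma eta_off {i j : Fin n} (h : i ≠ j) : eta p i j = 0 := by simp [eta, h]

lemma eta_symm (i j : Fin n) : eta p i j = eta p j i := by
  unfold eta
  by_cases h : i = j
  · subst h; rfl
  · simp [h, Ne.symm h]


def ckField (p : ℕ) {n : ℕ} (a : Fin n → ℝ) (om : Fin n → Fin n → ℝ) (lam : ℝ)
    (bb : Fin n → ℝ) : (Fin n → ℝ) → Fin n → ℝ :=
  fun x i => a i + etaSign p i * (∑ m, om i m * x m) + lam * x i
    + 2 * (∑ m, etaSign p m * bb m * x m) * x i - (∑ m, etaSign p m * x m * x m) * bb i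

lemma sum_eta_mul_left (i : Fin n) (c : Fin n → ℝ) :
    ∑ v, eta p v i * c v = etaSign p i * c i := by
  rw [Finset.sum_eq_single_of_mem i (Finset.mem_univ i)
    (fun b _ hb => by rw [eta_off p hb, zero_mul]), eta_diag]

lemma sum_eta_mul_right (i : Fin n) (c : Fin n → ℝ) :
    ∑ v, eta p i v * c v = etaSign p i * c i := by
  rw [Finset.sum_eq_single_of_mem i (Finset.mem_univ i)
    (fun b _ hb => by rw [eta_off p (Ne.symm hb), zero_mul]), eta_diag]

section WithX
variable {X : (Fin n → ℝ) → Fin n → ℝ} (hX : ContDiff ℝ (⊤:ℕ∞) X)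
include hX

lemma comp_contDiff (k : Fin n) : ContDiff ℝ (⊤:ℕ∞) (fun y => X y k) :=
  contDiff_pi.mp hX k

lemma Xl_contDiff (k : Fin n) : ContDiff ℝ (⊤:ℕ∞) (Xl p X k) :=
  contDiff_const.mul (comp_contDiff hX k)

lemma phi_contDiff : ContDiff ℝ (⊤:ℕ∞) (phi X) :=
  contDiff_const.mul (ContDiff.sum fun k _ => pd_contDiff (comp_contDiff hX k) k)

lemma CK' (hCK : ConformalKilling p X) (x : Fin n → ℝ) (i j : Fin n) :
    pd (Xl p X j) i x + pd (Xl p X i) j x = phi X x * eta p i j := by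
  have h1 : pd (Xl p X j) i x = etaSign p j * pd (fun y => X y j) i x :=
    pd_const_mul ((comp_contDiff hX j).differentiable (by simp) x) _ i
  have h2 : pd (Xl p X i) j x = etaSign p i * pd (fun y => X y i) j x :=
    pd_const_mul ((comp_contDiff hX i).differentiable (by simp) x) _ j
  rw [h1, h2, hCK x i j]
  show (2 / (n:ℝ)) * divg X x * (if i = j then etaSign p i else 0) = phi X x * eta p i j
  unfold phi eta
  ring

variable (hCK : ConformalKilling p X)
include hCK

lemma secondDeriv (x : Fin n → ℝ) (i j k : Fin n) :
    pd (fun y => pd (Xl p X k) j y) i x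
      = (1/2) * (eta p j k * pd (phi X) i x + eta p i k * pd (phi X) j x
          - eta p i j * pd (phi X) k x) := by
  have hXl := fun c => Xl_contDiff p hX (X := X) c
  have hphi := phi_contDiff hX
  have hdpd : ∀ (b c : Fin n), Differentiable ℝ (fun y => pd (Xl p X c) b y) :=
    fun b c => (pd_contDiff (hXl c) b).differentiable (by simp)
  have hdphi : Differentiable ℝ (phi X) := hphi.differentiable (by simp)
  have hsym : ∀ (a b c : Fin n),
      pd (fun y => pd (Xl p X c) b y) a x = pd (fun y => pd (Xl p X c) a y) b x :=
    fun a b c => pd_comm (hXl c) a b x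
  have hC : ∀ (a b c : Fin n),
      pd (fun y => pd (Xl p X c) b y) a x + pd (fun y => pd (Xl p X b) c y) a x
        = eta p b c * pd (phi X) a x := by
    intro a b c
    have e : (fun y => pd (Xl p X c) b y + pd (Xl p X b) c y)
        = (fun y => eta p b c * phi X y) := by
      funext y
      rw [CK' p hX hCK y b c]
      ring
    calc pd (fun y => pd (Xl p X c) b y) a x + pd (fun y => pd (Xl p X b) c y) a x
        = pd (fun y => pd (Xl p X c) b y + pd (Xl p X b) c y) a x :=
          (pd_add (hdpd b c x) (hdpd c b x) a).symm
      _ = pd (fun y => eta p b c * phi X y) a x := by rw [e]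
      _ = eta p b c * pd (phi X) a x := pd_const_mul (hdphi x) _ a
  have h1 := hC i j k
  have h2 := hC j i k
  have h3 := hC k i j
  have s1 := hsym i j k
  have s2 := hsym i k j
  have s3 := hsym j k i
  rw [hsym j i k] at h2
  rw [hsym k i j, hsym k j i] at h3
  linarith

lemma thirdDeriv (x : Fin n → ℝ) (a b j k : Fin n) :
    pd (fun y => pd (fun z => pd (Xl p X k) j z) b y) a x
      = (1/2) * (eta p j k * pd (fun y => pd (phi X) b y) a x
          + eta p b k * pd (fun y => pd (phi X) j y) a x
          - eta p b j * pd (fun y => pd (phi X) k y) a x) := by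
  have hphi := phi_contDiff hX
  have hdphi : ∀ (m : Fin n), Differentiable ℝ (fun y => pd (phi X) m y) :=
    fun m => (pd_contDiff hphi m).differentiable (by simp)
  have e : (fun y => pd (fun z => pd (Xl p X k) j z) b y)
      = fun y => (1/2) * (eta p j k * pd (phi X) b y + eta p b k * pd (phi X) j y
          - eta p b j * pd (phi X) k y) := by
    funext y
    exact secondDeriv p hX hCK y b j k
  have d1 : DifferentiableAt ℝ (fun y => eta p j k * pd (phi X) b y) x :=
    (differentiableAt_const _).mul (hdphi b x)
  have d2 : DifferentiableAt ℝ (fun y => eta p b k * pd (phi X) j y) x :=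
    (differentiableAt_const _).mul (hdphi j x)
  have d3 : DifferentiableAt ℝ (fun y => eta p b j * pd (phi X) k y) x :=
    (differentiableAt_const _).mul (hdphi k x)
  rw [e, pd_const_mul ((d1.fun_add d2).fun_sub d3) _ a, pd_sub (d1.fun_add d2) d3 a, pd_add d1 d2 a,
    pd_const_mul (hdphi b x) _ a, pd_const_mul (hdphi j x) _ a, pd_const_mul (hdphi k x) _ a]

omit hX hCK in
lemma etaSign_cases (i : Fin n) : etaSign p i = 1 ∨ etaSign p i = -1 := by
  unfold etaSign; split_ifs <;> simp

omit hX hCK in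
lemma exists_ne_pair (hn : 3 ≤ n) (a b : Fin n) : ∃ c : Fin n, c ≠ a ∧ c ≠ b := by
  by_contra h
  push_neg at h
  have hsub : (Finset.univ : Finset (Fin n)) ⊆ {a, b} := by
    intro c _
    by_cases hc : c = a
    · simp [hc]
    · simp [h c hc]
  have h1 := Finset.card_le_card hsub
  have h2 : ({a,b} : Finset (Fin n)).card ≤ 2 :=
    le_trans (Finset.card_insert_le _ _) (by simp)
  simp only [Finset.card_univ, Fintype.card_fin] at h1
  omega

lemma pdphi2_zero (hn : 3 ≤ n) (x : Fin n → ℝ) (l j : Fin n) :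
    pd (fun y => pd (phi X) j y) l x = 0 := by
  have hphi := phi_contDiff hX
  set P : Fin n → Fin n → ℝ := fun u v => pd (fun y => pd (phi X) v y) u x with hP
  show P l j = 0
  have hPsym : ∀ u v, P u v = P v u := fun u v => pd_comm hphi u v x
  have hKey : ∀ a b c k : Fin n,
      eta p c k * P a b + eta p b k * P a c - eta p b c * P a k
        = eta p c k * P b a + eta p a k * P b c - eta p a c * P b k := by
    intro a b c k
    have h1 := thirdDeriv p hX hCK x a b c k
    have h2 := thirdDeriv p hX hCK x b a c k
    have h3 : pd (fun y => pd (fun z => pd (Xl p X k) c z) b y) a x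
        = pd (fun y => pd (fun z => pd (Xl p X k) c z) a y) b x :=
      pd_comm (pd_contDiff (Xl_contDiff p hX k) c) a b x
    rw [h1, h2] at h3
    linarith
  have offdiag : ∀ u v : Fin n, u ≠ v → P u v = 0 := by
    intro u v huv
    obtain ⟨i, hiu, hiv⟩ := exists_ne_pair hn u v
    have hk := hKey u i v i
    rw [eta_off p (Ne.symm hiv), eta_off p hiv, eta_off p (Ne.symm hiu), eta_off p huv,
      eta_diag p i] at hk
    rcases etaSign_cases p i with h | h <;> rw [h] at hk <;> linarith
  have rel : ∀ l i : Fin n, i ≠ l →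
      etaSign p i * P l l = -(etaSign p l * P i i) := by
    intro l i hil
    have hk := hKey l i l i
    have e1 : eta p l i = 0 := eta_off p (Ne.symm hil)
    have e2 : eta p i l = 0 := eta_off p hil
    rw [e1, e2, eta_diag p i, eta_diag p l] at hk
    linarith
  by_cases hd : l = j
  · subst hd
    obtain ⟨b, hbl, -⟩ := exists_ne_pair hn l l
    obtain ⟨c, hcl, hcb⟩ := exists_ne_pair hn l b
    have h1 := rel l b hbl
    have h2 := rel l c hcl
    have h3 := rel b c hcb
    rcases etaSign_cases p l with e1|e1 <;> rcases etaSign_cases p b with e2|e2 <;>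
      rcases etaSign_cases p c with e3|e3 <;>
      simp only [e1, e2, e3] at h1 h2 h3 <;> linarith
  · exact offdiag l j hd


lemma phi_affine (hn : 3 ≤ n) (x : Fin n → ℝ) :
    phi X x = phi X 0 + ∑ j, pd (phi X) j 0 * x j :=
  affine_of_pd_const (phi_contDiff hX)
    (fun j y => by
      simpa using const_of_pd_zero
        ((pd_contDiff (phi_contDiff hX) j).differentiable (by simp))
        (fun i z => pdphi2_zero p hX hCK hn z i j) y) x

lemma Xl_third_zero (hn : 3 ≤ n) (a b c k : Fin n) (x : Fin n → ℝ) :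
    pd (fun y => pd (fun z => pd (Xl p X k) c z) b y) a x = 0 := by
  rw [thirdDeriv p hX hCK x a b c k, pdphi2_zero p hX hCK hn x a b,
    pdphi2_zero p hX hCK hn x a c, pdphi2_zero p hX hCK hn x a k]
  ring

lemma Xl_closed (hn : 3 ≤ n) (i : Fin n) (x : Fin n → ℝ) :
    Xl p X i x = Xl p X i 0 + (∑ m, pd (Xl p X i) m 0 * x m)
      + ((1/2) * (∑ u, pd (phi X) u 0 * x u) * (etaSign p i * x i)
        - (1/4) * (∑ u, etaSign p u * x u * x u) * pd (phi X) i 0) := by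
  have hq := quadratic_of_pd3_zero (Xl_contDiff p hX i)
    (fun a b c y => Xl_third_zero p hX hCK hn a b c i y) x
  rw [hq]
  have hco : ∀ u v : Fin n, pd (fun y => pd (Xl p X i) v y) u 0
      = (1/2) * (eta p v i * pd (phi X) u 0 + eta p u i * pd (phi X) v 0
          - eta p u v * pd (phi X) i 0) :=
    fun u v => secondDeriv p hX hCK 0 u v i
  have hdsum : ∑ u, ∑ v, pd (fun y => pd (Xl p X i) v y) u 0 * x u * x v
      = (∑ u, pd (phi X) u 0 * x u) * (etaSign p i * x i)
        - (1/2) * (∑ u, etaSign p u * x u * x u) * pd (phi X) i 0 := by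
    have inner : ∀ u : Fin n, ∑ v, pd (fun y => pd (Xl p X i) v y) u 0 * x u * x v
        = (1/2) * (pd (phi X) u 0 * x u * (etaSign p i * x i)
            + eta p u i * (x u * ∑ v, pd (phi X) v 0 * x v)
            - etaSign p u * (x u * pd (phi X) i 0 * x u)) := by
      intro u
      have step : ∀ v : Fin n, pd (fun y => pd (Xl p X i) v y) u 0 * x u * x v
          = (1/2) * (eta p v i * (pd (phi X) u 0 * x u * x v)
              + (eta p u i * x u) * (pd (phi X) v 0 * x v)
              - eta p u v * (x u * pd (phi X) i 0 * x v)) := by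
        intro v
        rw [hco u v]
        ring
      rw [Finset.sum_congr rfl (fun v _ => step v), ← Finset.mul_sum,
        Finset.sum_sub_distrib, Finset.sum_add_distrib,
        sum_eta_mul_left p i (fun v => pd (phi X) u 0 * x u * x v),
        sum_eta_mul_right p u (fun v => x u * pd (phi X) i 0 * x v),
        show (∑ v, (eta p u i * x u) * (pd (phi X) v 0 * x v))
          = (eta p u i * x u) * ∑ v, pd (phi X) v 0 * x v from (Finset.mul_sum _ _ _).symm]
      ring
    rw [Finset.sum_congr rfl (fun u _ => inner u), ← Finset.mul_sum,
      Finset.sum_sub_distrib, Finset.sum_add_distrib,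
      sum_eta_mul_left p i (fun u => x u * ∑ v, pd (phi X) v 0 * x v)]
    have e1 : ∑ u, pd (phi X) u 0 * x u * (etaSign p i * x i)
        = (∑ u, pd (phi X) u 0 * x u) * (etaSign p i * x i) := by
      rw [Finset.sum_mul]
    have e2 : ∑ u, etaSign p u * (x u * pd (phi X) i 0 * x u)
        = (∑ u, etaSign p u * x u * x u) * pd (phi X) i 0 := by
      rw [Finset.sum_mul]
      exact Finset.sum_congr rfl (fun u _ => by ring)
    rw [e1, e2]
    ring
  rw [hdsum]
  ring

lemma X_eq_ckField (hn : 3 ≤ n) :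
    X = ckField p (X 0) (fun i m => pd (Xl p X i) m 0 - (phi X 0 / 2) * eta p i m)
      (phi X 0 / 2) (fun m => etaSign p m * pd (phi X) m 0 / 4) := by
  funext x i
  have hx : X x i = etaSign p i * Xl p X i x := by
    unfold Xl
    rw [← mul_assoc, etaSign_sq, one_mul]
  rw [hx, Xl_closed p hX hCK hn i x]
  show _ = ckField p (X 0) _ (phi X 0 / 2) _ x i
  unfold ckField
  simp only []
  have r0 : Xl p X i 0 = etaSign p i * X 0 i := rfl
  have r1 : ∑ m, (pd (Xl p X i) m 0 - phi X 0 / 2 * eta p i m) * x m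
      = (∑ m, pd (Xl p X i) m 0 * x m) - phi X 0 / 2 * (etaSign p i * x i) := by
    rw [show (∑ m, (pd (Xl p X i) m 0 - phi X 0 / 2 * eta p i m) * x m)
        = ∑ m, (pd (Xl p X i) m 0 * x m - phi X 0 / 2 * (eta p i m * x m)) from
          Finset.sum_congr rfl (fun m _ => by ring),
      Finset.sum_sub_distrib, ← Finset.mul_sum, sum_eta_mul_right p i x]
  have r2 : ∑ m, etaSign p m * (etaSign p m * pd (phi X) m 0 / 4) * x m
      = (1/4) * ∑ u, pd (phi X) u 0 * x u := by
    rw [Finset.mul_sum]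
    refine Finset.sum_congr rfl (fun m _ => ?_)
    have h := etaSign_sq p m
    linear_combination (pd (phi X) m 0 / 4 * x m) * h
  rw [r0, r1, r2]
  rcases etaSign_cases p i with h | h <;> rw [h] <;> ring

end WithX

section Forward
variable (p : ℕ)

lemma diffAt_linear (c : Fin n → ℝ) (x : Fin n → ℝ) :
    DifferentiableAt ℝ (fun y : Fin n → ℝ => ∑ m, c m * y m) x :=
  ((contDiff_linear c).differentiable (by simp)).differentiableAt

lemma contDiff_normsq : ContDiff ℝ (⊤:ℕ∞) (fun y : Fin n → ℝ => ∑ m, etaSign p m * y m * y m) :=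
  ContDiff.sum fun m _ => (contDiff_const.mul (contDiff_coord m)).mul (contDiff_coord m)

lemma pd_normsq (j : Fin n) (x : Fin n → ℝ) :
    pd (fun y : Fin n → ℝ => ∑ m, etaSign p m * y m * y m) j x = 2 * etaSign p j * x j := by
  rw [pd_sum _ (fun m _ => (((differentiableAt_const _).fun_mul (diffAt_coord m x)).fun_mul
    (diffAt_coord m x))) j]
  have step : ∀ m : Fin n, pd (fun y : Fin n → ℝ => etaSign p m * y m * y m) j x
      = if j = m then 2 * etaSign p m * x m else 0 := by
    intro m
    rw [show (fun y : Fin n → ℝ => etaSign p m * y m * y m)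
        = fun y : Fin n → ℝ => etaSign p m * (y m * y m) from funext fun y => by ring,
      pd_const_mul ((diffAt_coord m x).fun_mul (diffAt_coord m x)),
      pd_mul (diffAt_coord m x) (diffAt_coord m x), pd_coord]
    by_cases h : j = m <;> simp [h] <;> ring
  rw [Finset.sum_congr rfl (fun m _ => step m), Finset.sum_ite_eq]
  simp

lemma contDiff_ckField (a : Fin n → ℝ) (om : Fin n → Fin n → ℝ) (lam : ℝ) (bb : Fin n → ℝ) :
    ContDiff ℝ (⊤:ℕ∞) (ckField p a om lam bb) := by
  apply contDiff_pi.mpr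
  intro i
  exact ((((contDiff_const.add (contDiff_const.mul (contDiff_linear (om i)))).add
      (contDiff_const.mul (contDiff_coord i))).add
      ((contDiff_const.mul (contDiff_linear (fun m => etaSign p m * bb m))).mul
        (contDiff_coord i))).sub ((contDiff_normsq p).mul contDiff_const))

lemma pd_ckField (a : Fin n → ℝ) (om : Fin n → Fin n → ℝ) (lam : ℝ) (bb : Fin n → ℝ)
    (i j : Fin n) (x : Fin n → ℝ) :
    pd (fun y => ckField p a om lam bb y i) j x
      = etaSign p i * om i j + lam * (if j = i then 1 else 0)
        + 2 * (etaSign p j * bb j * x i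
            + (∑ m, etaSign p m * bb m * x m) * (if j = i then 1 else 0))
        - 2 * etaSign p j * x j * bb i := by
  have d1 : DifferentiableAt ℝ (fun y : Fin n → ℝ => a i + etaSign p i * ∑ m, om i m * y m) x :=
    (differentiableAt_const _).add ((differentiableAt_const _).mul (diffAt_linear (om i) x))
  have d2 : DifferentiableAt ℝ (fun y : Fin n → ℝ => lam * y i) x :=
    (differentiableAt_const _).mul (diffAt_coord i x)
  have dS : DifferentiableAt ℝ (fun y : Fin n → ℝ => ∑ m, etaSign p m * bb m * y m) x :=
    diffAt_linear (fun m => etaSign p m * bb m) x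
  have d3 : DifferentiableAt ℝ
      (fun y : Fin n → ℝ => 2 * (∑ m, etaSign p m * bb m * y m) * y i) x :=
    (((differentiableAt_const (2:ℝ)).mul dS).mul (diffAt_coord i x))
  have dQ : DifferentiableAt ℝ (fun y : Fin n → ℝ => ∑ m, etaSign p m * y m * y m) x :=
    ((contDiff_normsq p).differentiable (by simp)).differentiableAt
  have d4 : DifferentiableAt ℝ (fun y : Fin n → ℝ => (∑ m, etaSign p m * y m * y m) * bb i) x :=
    dQ.mul (differentiableAt_const _)
  show pd (fun y => a i + etaSign p i * (∑ m, om i m * y m) + lam * y i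
      + 2 * (∑ m, etaSign p m * bb m * y m) * y i
      - (∑ m, etaSign p m * y m * y m) * bb i) j x = _
  rw [pd_sub (((d1.fun_add d2).fun_add d3)) d4 j, pd_add (d1.fun_add d2) d3 j, pd_add d1 d2 j,
    pd_add (differentiableAt_const (a i)) ((differentiableAt_const _).fun_mul (diffAt_linear (om i) x)) j,
    pd_const, pd_const_mul (diffAt_linear (om i) x), pd_linear,
    pd_const_mul (diffAt_coord i x), pd_coord]
  have e3 : pd (fun y : Fin n → ℝ => 2 * (∑ m, etaSign p m * bb m * y m) * y i) j x
      = 2 * (etaSign p j * bb j * x i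
          + (∑ m, etaSign p m * bb m * x m) * (if j = i then 1 else 0)) := by
    rw [show (fun y : Fin n → ℝ => 2 * (∑ m, etaSign p m * bb m * y m) * y i)
        = fun y => (2 * ∑ m, etaSign p m * bb m * y m) * y i from
          funext fun y => by ring,
      pd_mul ((differentiableAt_const (2:ℝ)).fun_mul dS) (diffAt_coord i x),
      pd_coord, pd_const_mul dS, pd_linear]
    ring
  have e4 : pd (fun y : Fin n → ℝ => (∑ m, etaSign p m * y m * y m) * bb i) j x
      = 2 * etaSign p j * x j * bb i := by
    rw [show (fun y : Fin n → ℝ => (∑ m, etaSign p m * y m * y m) * bb i)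
        = fun y => bb i * ∑ m, etaSign p m * y m * y m from funext fun y => by ring,
      pd_const_mul dQ, pd_normsq]
    ring
  rw [e3, e4]
  ring

lemma divg_ckField (a : Fin n → ℝ) (om : Fin n → Fin n → ℝ) (hom : ∀ i, om i i = 0)
    (lam : ℝ) (bb : Fin n → ℝ) (x : Fin n → ℝ) :
    divg (ckField p a om lam bb) x
      = (n : ℝ) * (lam + 2 * ∑ m, etaSign p m * bb m * x m) := by
  unfold divg
  rw [Finset.sum_congr rfl (fun k _ => pd_ckField p a om lam bb k k x)]
  have step : ∀ k : Fin n, etaSign p k * om k k + lam * (if k = k then 1 else 0)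
      + 2 * (etaSign p k * bb k * x k
          + (∑ m, etaSign p m * bb m * x m) * (if k = k then 1 else 0))
      - 2 * etaSign p k * x k * bb k
      = lam + 2 * ∑ m, etaSign p m * bb m * x m := by
    intro k
    rw [hom k]
    simp only [eq_self_iff_true, if_true]
    ring
  rw [Finset.sum_congr rfl (fun k _ => step k), Finset.sum_const, Finset.card_univ,
    Fintype.card_fin, nsmul_eq_mul]

lemma ckField_CK (hn : 3 ≤ n) (a : Fin n → ℝ) (om : Fin n → Fin n → ℝ)
    (hom : ∀ i j, om j i = - om i j) (lam : ℝ) (bb : Fin n → ℝ) :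
    ConformalKilling p (ckField p a om lam bb) := by
  have homd : ∀ i, om i i = 0 := fun i => by have := hom i i; linarith
  intro x i j
  rw [pd_ckField p a om lam bb j i x, pd_ckField p a om lam bb i j x,
    divg_ckField p a om homd lam bb x]
  have hne : (n : ℝ) ≠ 0 := by
    have : 0 < n := by omega
    exact_mod_cast this.ne'
  rw [show (2 / (n:ℝ)) * ((n:ℝ) * (lam + 2 * ∑ m, etaSign p m * bb m * x m))
        * (if i = j then etaSign p i else 0)
      = 2 * (lam + 2 * ∑ m, etaSign p m * bb m * x m) * (if i = j then etaSign p i else 0) from by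
    split_ifs <;> field_simp <;> ring]
  by_cases h : i = j
  · subst h
    simp only [eq_self_iff_true, if_true]
    rw [homd i]
    rcases etaSign_cases p i with hs | hs <;> rw [hs] <;> ring
  · have h' : ¬ j = i := fun hh => h (Eq.symm hh)
    simp only [if_neg h, if_neg h']
    rw [hom i j]
    rcases etaSign_cases p i with h1 | h1 <;> rcases etaSign_cases p j with h2 | h2 <;>
      rw [h1, h2] <;> ring

end Forward


section Bracket
variable (p : ℕ) {X Y : (Fin n → ℝ) → Fin n → ℝ}

lemma sum_eps_eta (l : Fin n) (C : Fin n → ℝ) :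
    ∑ m, etaSign p m * eta p l m * C m = C l := by
  rw [Finset.sum_eq_single_of_mem l (Finset.mem_univ l)
    (fun b _ hb => by rw [eta_off p (Ne.symm hb), mul_zero, zero_mul]),
    eta_diag, etaSign_sq, one_mul]

variable (hX : ContDiff ℝ (⊤:ℕ∞) X) (hY : ContDiff ℝ (⊤:ℕ∞) Y)
  (hCKX : ConformalKilling p X) (hCKY : ConformalKilling p Y)

include hX hY in
lemma lieBracket_contDiff : ContDiff ℝ (⊤:ℕ∞) (lieBracketVF X Y) := by
  apply contDiff_pi.mpr
  intro i
  show ContDiff ℝ (⊤:ℕ∞) (fun x => ∑ j, (X x j * pd (fun y => Y y i) j x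
    - Y x j * pd (fun y => X y i) j x))
  exact ContDiff.sum fun j _ =>
    ((comp_contDiff hX j).mul (pd_contDiff (comp_contDiff hY i) j)).sub
      ((comp_contDiff hY j).mul (pd_contDiff (comp_contDiff hX i) j))

include hX hCKX in
lemma CKpair (x : Fin n → ℝ) (u v : Fin n) :
    etaSign p v * pd (fun y => X y v) u x + etaSign p u * pd (fun y => X y u) v x
      = phi X x * eta p u v := by
  rw [hCKX x u v]
  show (2/(n:ℝ)) * divg X x * (if u = v then etaSign p u else 0) = phi X x * eta p u v
  unfold phi eta
  ring

include hX hCKX in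
lemma pairDeriv (x : Fin n → ℝ) (m u v : Fin n) :
    etaSign p v * pd (fun y => pd (fun z => X z v) u y) m x
      + etaSign p u * pd (fun y => pd (fun z => X z u) v y) m x
      = eta p u v * pd (phi X) m x := by
  have hfun : (fun y => etaSign p v * pd (fun z => X z v) u y
      + etaSign p u * pd (fun z => X z u) v y) = fun y => eta p u v * phi X y := by
    funext y
    linear_combination CKpair p hX hCKX y u v
  have dv : DifferentiableAt ℝ (fun y => etaSign p v * pd (fun z => X z v) u y) x :=
    (differentiableAt_const _).mul
      ((pd_contDiff (comp_contDiff hX v) u).differentiable (by simp) x)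
  have du : DifferentiableAt ℝ (fun y => etaSign p u * pd (fun z => X z u) v y) x :=
    (differentiableAt_const _).mul
      ((pd_contDiff (comp_contDiff hX u) v).differentiable (by simp) x)
  have hL : etaSign p v * pd (fun y => pd (fun z => X z v) u y) m x
      + etaSign p u * pd (fun y => pd (fun z => X z u) v y) m x
      = pd (fun y => etaSign p v * pd (fun z => X z v) u y
          + etaSign p u * pd (fun z => X z u) v y) m x := by
    rw [pd_add dv du m,
      pd_const_mul ((pd_contDiff (comp_contDiff hX v) u).differentiable (by simp) x),
      pd_const_mul ((pd_contDiff (comp_contDiff hX u) v).differentiable (by simp) x)]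
  rw [hL, hfun, pd_const_mul ((phi_contDiff hX).differentiable (by simp) x)]

include hX hY hCKX hCKY in
lemma bracket_pair (x : Fin n → ℝ) (l k : Fin n) :
    etaSign p k * pd (fun y => lieBracketVF X Y y k) l x
      + etaSign p l * pd (fun y => lieBracketVF X Y y l) k x
      = eta p l k * ∑ m, (X x m * pd (phi Y) m x - Y x m * pd (phi X) m x) := by
  have dX : ∀ m, DifferentiableAt ℝ (fun y => X y m) x :=
    fun m => ((comp_contDiff hX m).differentiable (by simp) x)
  have dY : ∀ m, DifferentiableAt ℝ (fun y => Y y m) x :=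
    fun m => ((comp_contDiff hY m).differentiable (by simp) x)
  have dpX : ∀ c m, DifferentiableAt ℝ (fun y => pd (fun z => X z c) m y) x :=
    fun c m => ((pd_contDiff (comp_contDiff hX c) m).differentiable (by simp) x)
  have dpY : ∀ c m, DifferentiableAt ℝ (fun y => pd (fun z => Y z c) m y) x :=
    fun c m => ((pd_contDiff (comp_contDiff hY c) m).differentiable (by simp) x)
  have pdZ : ∀ c d : Fin n, pd (fun y => lieBracketVF X Y y c) d x
      = ∑ m, (pd (fun y => X y m) d x * pd (fun y => Y y c) m x
          + X x m * pd (fun y => pd (fun z => Y z c) m y) d x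
          - (pd (fun y => Y y m) d x * pd (fun y => X y c) m x
          + Y x m * pd (fun y => pd (fun z => X z c) m y) d x)) := by
    intro c d
    show pd (fun y => ∑ m, (X y m * pd (fun z => Y z c) m y
        - Y y m * pd (fun z => X z c) m y)) d x = _
    rw [pd_sum _ (fun m _ => ((dX m).fun_mul (dpY c m)).fun_sub ((dY m).fun_mul (dpX c m))) d]
    refine Finset.sum_congr rfl fun m _ => ?_
    rw [pd_sub ((dX m).fun_mul (dpY c m)) ((dY m).fun_mul (dpX c m)),
      pd_mul (dX m) (dpY c m), pd_mul (dY m) (dpX c m)]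
    ring
  rw [pdZ k l, pdZ l k, Finset.mul_sum, Finset.mul_sum, ← Finset.sum_add_distrib]
  have hsplit : ∀ m : Fin n,
      etaSign p k * (pd (fun y => X y m) l x * pd (fun y => Y y k) m x
          + X x m * pd (fun y => pd (fun z => Y z k) m y) l x
          - (pd (fun y => Y y m) l x * pd (fun y => X y k) m x
          + Y x m * pd (fun y => pd (fun z => X z k) m y) l x))
        + etaSign p l * (pd (fun y => X y m) k x * pd (fun y => Y y l) m x
          + X x m * pd (fun y => pd (fun z => Y z l) m y) k x
          - (pd (fun y => Y y m) k x * pd (fun y => X y l) m x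
          + Y x m * pd (fun y => pd (fun z => X z l) m y) k x))
      = (X x m * (eta p l k * pd (phi Y) m x) - Y x m * (eta p l k * pd (phi X) m x))
        + (phi X x * (etaSign p k * (etaSign p m * eta p l m * pd (fun y => Y y k) m x)
              + etaSign p l * (etaSign p m * eta p k m * pd (fun y => Y y l) m x))
          - phi Y x * (etaSign p k * (etaSign p m * eta p l m * pd (fun y => X y k) m x)
              + etaSign p l * (etaSign p m * eta p k m * pd (fun y => X y l) m x))) := by
    intro m
    have sA1 : pd (fun y => X y m) l x
        = etaSign p m * phi X x * eta p l m
          - etaSign p m * etaSign p l * pd (fun y => X y l) m x := by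
      linear_combination etaSign p m * CKpair p hX hCKX x l m
        - pd (fun y => X y m) l x * etaSign_sq p m
    have sA2 : pd (fun y => X y m) k x
        = etaSign p m * phi X x * eta p k m
          - etaSign p m * etaSign p k * pd (fun y => X y k) m x := by
      linear_combination etaSign p m * CKpair p hX hCKX x k m
        - pd (fun y => X y m) k x * etaSign_sq p m
    have sB1 : pd (fun y => Y y m) l x
        = etaSign p m * phi Y x * eta p l m
          - etaSign p m * etaSign p l * pd (fun y => Y y l) m x := by
      linear_combination etaSign p m * CKpair p hY hCKY x l m
        - pd (fun y => Y y m) l x * etaSign_sq p m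
    have sB2 : pd (fun y => Y y m) k x
        = etaSign p m * phi Y x * eta p k m
          - etaSign p m * etaSign p k * pd (fun y => Y y k) m x := by
      linear_combination etaSign p m * CKpair p hY hCKY x k m
        - pd (fun y => Y y m) k x * etaSign_sq p m
    have symB1 : pd (fun y => pd (fun z => Y z k) m y) l x
        = pd (fun y => pd (fun z => Y z k) l y) m x := pd_comm (comp_contDiff hY k) l m x
    have symB2 : pd (fun y => pd (fun z => Y z l) m y) k x
        = pd (fun y => pd (fun z => Y z l) k y) m x := pd_comm (comp_contDiff hY l) k m x
    have symA1 : pd (fun y => pd (fun z => X z k) m y) l x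
        = pd (fun y => pd (fun z => X z k) l y) m x := pd_comm (comp_contDiff hX k) l m x
    have symA2 : pd (fun y => pd (fun z => X z l) m y) k x
        = pd (fun y => pd (fun z => X z l) k y) m x := pd_comm (comp_contDiff hX l) k m x
    have pairY := pairDeriv p hY hCKY x m l k
    have pairX := pairDeriv p hX hCKX x m l k
    rw [sA1, sA2, sB1, sB2, symB1, symB2, symA1, symA2]
    linear_combination X x m * pairY - Y x m * pairX
  rw [Finset.sum_congr rfl (fun m _ => hsplit m), Finset.sum_add_distrib]
  have hG : ∑ m, (phi X x * (etaSign p k * (etaSign p m * eta p l m * pd (fun y => Y y k) m x)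
        + etaSign p l * (etaSign p m * eta p k m * pd (fun y => Y y l) m x))
      - phi Y x * (etaSign p k * (etaSign p m * eta p l m * pd (fun y => X y k) m x)
        + etaSign p l * (etaSign p m * eta p k m * pd (fun y => X y l) m x))) = 0 := by
    rw [Finset.sum_sub_distrib, ← Finset.mul_sum, ← Finset.mul_sum, Finset.sum_add_distrib,
      Finset.sum_add_distrib, ← Finset.mul_sum, ← Finset.mul_sum, ← Finset.mul_sum,
      ← Finset.mul_sum, sum_eps_eta p l (fun m => pd (fun y => Y y k) m x),
      sum_eps_eta p k (fun m => pd (fun y => Y y l) m x),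
      sum_eps_eta p l (fun m => pd (fun y => X y k) m x),
      sum_eps_eta p k (fun m => pd (fun y => X y l) m x)]
    have h1 := CKpair p hX hCKX x l k
    have h2 := CKpair p hY hCKY x l k
    linear_combination phi X x * h2 - phi Y x * h1
  rw [hG, add_zero, Finset.mul_sum]
  refine Finset.sum_congr rfl fun m _ => ?_
  ring

include hX hY hCKX hCKY in
lemma lieBracket_CK (hn : 3 ≤ n) : ConformalKilling p (lieBracketVF X Y) := by
  intro x i j
  have hne : (n : ℝ) ≠ 0 := by
    have : 0 < n := by omega
    exact_mod_cast this.ne'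
  set W : ℝ := ∑ m, (X x m * pd (phi Y) m x - Y x m * pd (phi X) m x) with hW
  have hdiag : ∀ c : Fin n, pd (fun y => lieBracketVF X Y y c) c x = W / 2 := by
    intro c
    have h := bracket_pair p hX hY hCKX hCKY x c c
    rw [eta_diag] at h
    have h2 : etaSign p c * (2 * pd (fun y => lieBracketVF X Y y c) c x)
        = etaSign p c * W := by linarith
    have := mul_left_cancel₀ (etaSign_ne_zero p c) h2
    linarith
  have hdivg : divg (lieBracketVF X Y) x = (n:ℝ) * (W / 2) := by
    show (∑ c, pd (fun y => lieBracketVF X Y y c) c x) = _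
    rw [Finset.sum_congr rfl (fun c _ => hdiag c), Finset.sum_const, Finset.card_univ,
      Fintype.card_fin, nsmul_eq_mul]
  rw [bracket_pair p hX hY hCKX hCKY x i j, hdivg]
  show eta p i j * W = 2 / (n:ℝ) * ((n:ℝ) * (W/2)) * (if i = j then etaSign p i else 0)
  unfold eta
  split_ifs
  · field_simp
  · ring

end Bracket


section Assemble
variable (p : ℕ)

def omOf {n : ℕ} (u : {q : Fin n × Fin n // q.1 < q.2} → ℝ) : Fin n → Fin n → ℝ :=
  fun i j => if h : i < j then u ⟨(i,j), h⟩ else if h' : j < i then - u ⟨(j,i), h'⟩ else 0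

lemma omOf_lt {n : ℕ} (u : {q : Fin n × Fin n // q.1 < q.2} → ℝ) {i j : Fin n} (h : i < j) :
    omOf u i j = u ⟨(i,j), h⟩ := dif_pos h

lemma omOf_gt {n : ℕ} (u : {q : Fin n × Fin n // q.1 < q.2} → ℝ) {i j : Fin n} (h : j < i) :
    omOf u i j = - u ⟨(j,i), h⟩ := by
  unfold omOf
  rw [dif_neg (asymm h), dif_pos h]

lemma omOf_eq {n : ℕ} (u : {q : Fin n × Fin n // q.1 < q.2} → ℝ) (i : Fin n) :
    omOf u i i = 0 := by
  unfold omOf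
  rw [dif_neg (lt_irrefl i), dif_neg (lt_irrefl i)]

lemma omOf_skew {n : ℕ} (u : {q : Fin n × Fin n // q.1 < q.2} → ℝ) (i j : Fin n) :
    omOf u j i = - omOf u i j := by
  rcases lt_trichotomy i j with h | h | h
  · rw [omOf_gt u h, omOf_lt u h]
  · subst h
    rw [omOf_eq]
    ring
  · rw [omOf_lt u h, omOf_gt u h]
    ring

lemma omOf_diag {n : ℕ} (u : {q : Fin n × Fin n // q.1 < q.2} → ℝ) (i : Fin n) :
    omOf u i i = 0 := omOf_eq u i

lemma omOf_add {n : ℕ} (u v : {q : Fin n × Fin n // q.1 < q.2} → ℝ) :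
    omOf (u + v) = fun i j => omOf u i j + omOf v i j := by
  funext i j
  rcases lt_trichotomy i j with h | h | h
  · rw [omOf_lt _ h, omOf_lt u h, omOf_lt v h]
    rfl
  · subst h
    rw [omOf_eq, omOf_eq, omOf_eq]
    ring
  · rw [omOf_gt _ h, omOf_gt u h, omOf_gt v h]
    show -((u + v) ⟨(j,i), h⟩) = _
    show -(u ⟨(j,i), h⟩ + v ⟨(j,i), h⟩) = _
    ring

lemma omOf_smul {n : ℕ} (c : ℝ) (u : {q : Fin n × Fin n // q.1 < q.2} → ℝ) :
    omOf (c • u) = fun i j => c * omOf u i j := by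
  funext i j
  rcases lt_trichotomy i j with h | h | h
  · rw [omOf_lt _ h, omOf_lt u h]
    rfl
  · subst h
    rw [omOf_eq, omOf_eq]
    ring
  · rw [omOf_gt _ h, omOf_gt u h]
    show -(c * u ⟨(j,i), h⟩) = _
    ring

lemma ckField_add {n : ℕ} (a a' : Fin n → ℝ) (om om' : Fin n → Fin n → ℝ) (lam lam' : ℝ)
    (bb bb' : Fin n → ℝ) :
    ckField p (fun i => a i + a' i) (fun i j => om i j + om' i j) (lam + lam')
      (fun i => bb i + bb' i)
      = ckField p a om lam bb + ckField p a' om' lam' bb' := by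
  funext x i
  show _ = ckField p a om lam bb x i + ckField p a' om' lam' bb' x i
  unfold ckField
  have e1 : ∑ m, (om i m + om' i m) * x m
      = (∑ m, om i m * x m) + ∑ m, om' i m * x m := by
    rw [← Finset.sum_add_distrib]
    exact Finset.sum_congr rfl fun m _ => by ring
  have e2 : ∑ m, etaSign p m * (bb m + bb' m) * x m
      = (∑ m, etaSign p m * bb m * x m) + ∑ m, etaSign p m * bb' m * x m := by
    rw [← Finset.sum_add_distrib]
    exact Finset.sum_congr rfl fun m _ => by ring
  rw [e1, e2]
  ring

lemma ckField_smul {n : ℕ} (c : ℝ) (a : Fin n → ℝ) (om : Fin n → Fin n → ℝ) (lam : ℝ)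
    (bb : Fin n → ℝ) :
    ckField p (fun i => c * a i) (fun i j => c * om i j) (c * lam) (fun i => c * bb i)
      = c • ckField p a om lam bb := by
  funext x i
  show _ = c * ckField p a om lam bb x i
  unfold ckField
  have e1 : ∑ m, (c * om i m) * x m = c * ∑ m, om i m * x m := by
    rw [Finset.mul_sum]
    exact Finset.sum_congr rfl fun m _ => by ring
  have e2 : ∑ m, etaSign p m * (c * bb m) * x m = c * ∑ m, etaSign p m * bb m * x m := by
    rw [Finset.mul_sum]
    exact Finset.sum_congr rfl fun m _ => by ring
  rw [e1, e2]
  ring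

abbrev Params (n : ℕ) : Type :=
  (Fin n → ℝ) × (({q : Fin n × Fin n // q.1 < q.2} → ℝ) × (ℝ × (Fin n → ℝ)))

def Phi (p n : ℕ) : Params n →ₗ[ℝ] ((Fin n → ℝ) → Fin n → ℝ) where
  toFun := fun w => ckField p w.1 (omOf w.2.1) w.2.2.1 w.2.2.2
  map_add' := by
    rintro ⟨a, u, lam, bb⟩ ⟨a', u', lam', bb'⟩
    show ckField p (a + a') (omOf (u + u')) (lam + lam') (bb + bb') = _
    rw [omOf_add]
    exact ckField_add p a a' (omOf u) (omOf u') lam lam' bb bb'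
  map_smul' := by
    rintro c ⟨a, u, lam, bb⟩
    show ckField p (c • a) (omOf (c • u)) (c * lam) (c • bb) = _
    rw [omOf_smul]
    exact ckField_smul p c a (omOf u) lam bb

lemma Phi_mem_iff (n : ℕ) (hn : 3 ≤ n) (X : (Fin n → ℝ) → Fin n → ℝ) :
    X ∈ LinearMap.range (Phi p n) ↔ ContDiff ℝ (⊤:ℕ∞) X ∧ ConformalKilling p X := by
  constructor
  · rintro ⟨⟨a, u, lam, bb⟩, rfl⟩
    exact ⟨contDiff_ckField p a (omOf u) lam bb,
      ckField_CK p hn a (omOf u) (omOf_skew u) lam bb⟩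
  · rintro ⟨hX, hCK⟩
    set om : Fin n → Fin n → ℝ :=
      fun i m => pd (Xl p X i) m 0 - phi X 0 / 2 * eta p i m with hom
    have hskew : ∀ i j, om j i = - om i j := by
      intro i j
      have h := CK' p hX hCK 0 j i
      have h2 : eta p j i = eta p i j := eta_symm p j i
      show pd (Xl p X j) i 0 - phi X 0 / 2 * eta p j i
        = -(pd (Xl p X i) j 0 - phi X 0 / 2 * eta p i j)
      rw [h2] at h ⊢
      linarith
    refine ⟨(X 0, fun q => om q.1.1 q.1.2, phi X 0 / 2,
      fun m => etaSign p m * pd (phi X) m 0 / 4), ?_⟩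
    show ckField p (X 0) (omOf _) _ _ = X
    have homid : omOf (fun q : {q : Fin n × Fin n // q.1 < q.2} => om q.1.1 q.1.2) = om := by
      funext i j
      unfold omOf
      rcases lt_trichotomy i j with h | h | h
      · rw [dif_pos h]
      · subst h
        rw [dif_neg (lt_irrefl i), dif_neg (lt_irrefl i)]
        have := hskew i i
        linarith
      · rw [dif_neg (asymm h), dif_pos h]
        have := hskew i j
        show -om j i = om i j
        linarith [hskew j i]
    rw [homid]
    exact (X_eq_ckField p hX hCK hn).symm

lemma Phi_zero (n : ℕ) (hn : 3 ≤ n) (a : Fin n → ℝ) (u : {q : Fin n × Fin n // q.1 < q.2} → ℝ)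
    (lam : ℝ) (bb : Fin n → ℝ) (h : ckField p a (omOf u) lam bb = 0) :
    a = 0 ∧ u = 0 ∧ lam = 0 ∧ bb = 0 := by
  have i0 : Fin n := ⟨0, by omega⟩
  have hA : a = 0 := by
    funext i
    have h0 := congrFun (congrFun h 0) i
    have e : ckField p a (omOf u) lam bb 0 i = a i := by
      unfold ckField
      simp
    rw [e] at h0
    exact h0
  have hpd : ∀ (i j : Fin n) (x : Fin n → ℝ),
      etaSign p i * omOf u i j + lam * (if j = i then 1 else 0)
        + 2 * (etaSign p j * bb j * x i
            + (∑ m, etaSign p m * bb m * x m) * (if j = i then 1 else 0))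
        - 2 * etaSign p j * x j * bb i = 0 := by
    intro i j x
    rw [← pd_ckField p a (omOf u) lam bb i j x]
    have e : (fun y => ckField p a (omOf u) lam bb y i) = fun _ => (0:ℝ) := by
      funext y
      rw [h]
      rfl
    rw [e, pd_const]
  have hlam : lam = 0 := by
    have hp := hpd i0 i0 0
    simp [omOf_diag u i0] at hp
    exact hp
  have hOm : ∀ i j : Fin n, omOf u i j = 0 := by
    intro i j
    by_cases hij : j = i
    · subst hij
      exact omOf_diag u j
    · have hp := hpd i j 0
      simp [hij, hlam] at hp
      exact hp.resolve_left (etaSign_ne_zero p i)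
  have hu : u = 0 := by
    funext q
    obtain ⟨⟨i, j⟩, hlt⟩ := q
    have hq := hOm i j
    unfold omOf at hq
    rw [dif_pos hlt] at hq
    exact hq
  have hbb : bb = 0 := by
    funext j
    obtain ⟨i, hij, -⟩ := exists_ne_pair hn j j
    have hp := hpd i j (Pi.single i (1:ℝ))
    have hji : ¬ (j = i) := fun hh => hij hh.symm
    have hxi : (Pi.single i 1 : Fin n → ℝ) i = 1 := by
      rw [Pi.single_apply, if_pos rfl]
    have hxj : (Pi.single i 1 : Fin n → ℝ) j = 0 := by
      rw [Pi.single_apply, if_neg hji]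
    rw [hOm i j, hxi, hxj, hlam] at hp
    simp only [if_neg hji] at hp
    have h5 : etaSign p j * bb j = 0 := by linarith
    rcases mul_eq_zero.mp h5 with hc | hc
    · exact absurd hc (etaSign_ne_zero p j)
    · exact hc
  exact ⟨hA, hu, hlam, hbb⟩

lemma Phi_injective (n : ℕ) (hn : 3 ≤ n) : Function.Injective (Phi p n) := by
  rw [← LinearMap.ker_eq_bot]
  rw [Submodule.eq_bot_iff]
  intro w hw
  have hw' : ckField p w.1 (omOf w.2.1) w.2.2.1 w.2.2.2 = 0 := hw
  obtain ⟨h1, h2, h3, h4⟩ := Phi_zero p n hn w.1 w.2.1 w.2.2.1 w.2.2.2 hw'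
  have e : w = (w.1, (w.2.1, (w.2.2.1, w.2.2.2))) := rfl
  rw [e, h1, h2, h3, h4]
  rfl

lemma card_pairs (n : ℕ) : 2 * Fintype.card {q : Fin n × Fin n // q.1 < q.2} = n * n - n := by
  rw [Fintype.card_subtype]
  have hcard : (Finset.univ.filter (fun q : Fin n × Fin n => q.1 < q.2)).card
      = (Finset.univ.filter (fun q : Fin n × Fin n => q.2 < q.1)).card := by
    refine Finset.card_bij' (fun q _ => (q.2, q.1)) (fun q _ => (q.2, q.1)) ?_ ?_ ?_ ?_
    · intro q hq
      rw [Finset.mem_filter] at hq ⊢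
      exact ⟨Finset.mem_univ _, hq.2⟩
    · intro q hq
      rw [Finset.mem_filter] at hq ⊢
      exact ⟨Finset.mem_univ _, hq.2⟩
    · intro q hq
      rfl
    · intro q hq
      rfl
  have hunion : Finset.univ.filter (fun q : Fin n × Fin n => q.1 ≠ q.2)
      = Finset.univ.filter (fun q : Fin n × Fin n => q.1 < q.2)
        ∪ Finset.univ.filter (fun q : Fin n × Fin n => q.2 < q.1) := by
    ext q
    simp only [Finset.mem_filter, Finset.mem_univ, true_and, Finset.mem_union]
    exact ne_iff_lt_or_gt
  have hdisj : Disjoint (Finset.univ.filter (fun q : Fin n × Fin n => q.1 < q.2))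
      (Finset.univ.filter (fun q : Fin n × Fin n => q.2 < q.1)) := by
    rw [Finset.disjoint_left]
    intro q h1 h2
    rw [Finset.mem_filter] at h1 h2
    exact absurd h2.2 (asymm h1.2)
  have hne_card : (Finset.univ.filter (fun q : Fin n × Fin n => q.1 ≠ q.2)).card = n*n - n := by
    have e : Finset.univ.filter (fun q : Fin n × Fin n => q.1 ≠ q.2)
        = (Finset.univ : Finset (Fin n)).offDiag := by
      ext q
      simp [Finset.mem_offDiag]
    rw [e, Finset.offDiag_card, Finset.card_univ, Fintype.card_fin]
  rw [hunion, Finset.card_union_of_disjoint hdisj, ← hcard] at hne_card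
  omega

end Assemble

end CKAux
end

/-- For `n = p + q ≥ 3`, the set of (smooth) conformal Killing vector fields of
the flat metric `η` on `ℝⁿ` is a real vector subspace of the space of vector fields, closed
under the Lie bracket of vector fields, and its dimension is `(n+1)(n+2)/2`. -/
theorem conformal_killing_subspace_bracket_closed_dim (p q : ℕ) (hn : 3 ≤ p + q) :
    ∃ S : Submodule ℝ ((Fin (p + q) → ℝ) → Fin (p + q) → ℝ),
      (∀ X, X ∈ S ↔ ContDiff ℝ (⊤ : ℕ∞) X ∧ ConformalKilling p X) ∧
      (∀ X Y, X ∈ S → Y ∈ S → lieBracketVF X Y ∈ S) ∧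
      Module.finrank ℝ S = (p + q + 1) * (p + q + 2) / 2 := by
  refine ⟨LinearMap.range (CKAux.Phi p (p+q)),
    fun X => CKAux.Phi_mem_iff p (p+q) hn X, ?_, ?_⟩
  · intro X Y hXm hYm
    obtain ⟨hX, hCKX⟩ := (CKAux.Phi_mem_iff p (p+q) hn X).mp hXm
    obtain ⟨hY, hCKY⟩ := (CKAux.Phi_mem_iff p (p+q) hn Y).mp hYm
    exact (CKAux.Phi_mem_iff p (p+q) hn (lieBracketVF X Y)).mpr
      ⟨CKAux.lieBracket_contDiff hX hY, CKAux.lieBracket_CK p hX hY hCKX hCKY hn⟩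
  · have hrank : Module.finrank ℝ (LinearMap.range (CKAux.Phi p (p+q)))
        = Module.finrank ℝ (CKAux.Params (p+q)) :=
      LinearMap.finrank_range_of_inj (CKAux.Phi_injective p (p+q) hn)
    have hParams : Module.finrank ℝ (CKAux.Params (p+q))
        = (p+q) + (Fintype.card {q' : Fin (p+q) × Fin (p+q) // q'.1 < q'.2} + (1 + (p+q))) := by
      rw [Module.finrank_prod, Module.finrank_prod, Module.finrank_prod,
        Module.finrank_pi, Module.finrank_pi, Module.finrank_self, Fintype.card_fin]
    have hL := CKAux.card_pairs (p+q)
    rw [hrank, hParams]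
    obtain ⟨nn, hnn⟩ : ∃ m, (p+q)*(p+q) = m := ⟨_, rfl⟩
    have hle : (p+q) ≤ nn := by
      rw [← hnn]
      exact Nat.le_mul_of_pos_left (p+q) (show 0 < p+q by omega)
    rw [show (p+q+1)*(p+q+2) = nn + 3*(p+q) + 2 from by rw [← hnn]; ring]
    rw [hnn] at hL
    omega
end
end

section
/- Let n = p + q ≥ 3 and let γ¹,…,γⁿ ∈ M_N(ℂ) satisfy γⁱγ^j + γ^jγⁱ = 2 η^{ij} I. Let D = Σᵢ γⁱ ∂ᵢ be the flat Dirac operator acting on smooth maps ψ : ℝⁿ → ℂ^N. Then for every conformal Killing vector field X of the flat metric η on ℝⁿ and every smooth ψ, D(L^{(n−1)/(2n)}_X ψ) = L^{(n+1)/(2n)}_X (Dψ); i.e., the Dirac operator is a conformally invariant operator from spinor fields of weight (n−1)/(2n) to spinor fields of weight (n+1)/(2n). -/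
open Matrix BigOperators

noncomputable section

/-- The matrix entries `η^{ij} = η_{ij}` of the flat diagonal metric of signature `(p, n−p)`. -/
def etaUp (p : ℕ) {n : ℕ} (i j : Fin n) : ℝ := if i = j then etaSign p i else 0

/-- The partial derivative `∂_i ψ (x)` of a spinor field `ψ : ℝⁿ → ℂ^N`. -/
def pdV {n N : ℕ} (ψ : (Fin n → ℝ) → Fin N → ℂ) (i : Fin n) (x : Fin n → ℝ) : Fin N → ℂ :=
  fderiv ℝ ψ x (Pi.single i 1)

/-- The weighted Kosmann Lie derivative of a spinor field along a vector field `X`: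
`L^λ_X ψ = Σᵢ Xⁱ ∂ᵢψ + (1/4) Σ_{i,j} ∂_{[i}X_{j]} γⁱγ^j ψ + λ (Σ_k ∂_k X^k) ψ`, where
`∂_{[i}X_{j]} = (1/2)(∂ᵢX_j − ∂_jXᵢ)` and `X_j = η_{jj} X^j`. -/
def kosmann (p : ℕ) {n N : ℕ} (γ : Fin n → Matrix (Fin N) (Fin N) ℂ) (lam : ℝ)
    (X : (Fin n → ℝ) → Fin n → ℝ) (ψ : (Fin n → ℝ) → Fin N → ℂ) :
    (Fin n → ℝ) → Fin N → ℂ :=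
  fun x =>
    (∑ i, X x i • pdV ψ i x)
    + (1 / 4 : ℝ) • ∑ i, ∑ j,
        ((1 / 2 : ℝ) * (etaSign p j * pd (fun y => X y j) i x
                        - etaSign p i * pd (fun y => X y i) j x))
          • (γ i * γ j).mulVec (ψ x)
    + (lam * divg X x) • ψ x

/-- The flat Dirac operator `D = Σᵢ γⁱ ∂ᵢ` on spinor fields `ψ : ℝⁿ → ℂ^N`. -/
def dirac {n N : ℕ} (γ : Fin n → Matrix (Fin N) (Fin N) ℂ)
    (ψ : (Fin n → ℝ) → Fin N → ℂ) : (Fin n → ℝ) → Fin N → ℂ :=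
  fun x => ∑ i, (γ i).mulVec (pdV ψ i x)


section Aux
variable {n N : ℕ}

private lemma hTop1 : ((⊤:ℕ∞) : WithTop ℕ∞) ≠ 0 := by simp
private lemma hTop2 : minSmoothness ℝ 2 ≤ ((⊤:ℕ∞) : WithTop ℕ∞) := by
  rw [minSmoothness_of_isRCLikeNormedField]; exact WithTop.coe_le_coe.mpr le_top
private lemma hTopP : ((⊤:ℕ∞) : WithTop ℕ∞) + 1 ≤ ((⊤:ℕ∞) : WithTop ℕ∞) :=
  le_of_eq (by exact_mod_cast rfl)

lemma contDiff_pd {f : (Fin n → ℝ) → ℝ} (hf : ContDiff ℝ (⊤:ℕ∞) f) (j : Fin n) :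
    ContDiff ℝ (⊤:ℕ∞) (pd f j) := by
  have h1 : ContDiff ℝ (⊤:ℕ∞) (fderiv ℝ f) := hf.fderiv_right hTopP
  exact (ContinuousLinearMap.apply ℝ ℝ (Pi.single j 1 : Fin n → ℝ)).contDiff.comp h1

lemma contDiff_pdV {f : (Fin n → ℝ) → Fin N → ℂ} (hf : ContDiff ℝ (⊤:ℕ∞) f) (j : Fin n) :
    ContDiff ℝ (⊤:ℕ∞) (pdV f j) := by
  have h1 : ContDiff ℝ (⊤:ℕ∞) (fderiv ℝ f) := hf.fderiv_right hTopP
  exact (ContinuousLinearMap.apply ℝ (Fin N → ℂ) (Pi.single j 1 : Fin n → ℝ)).contDiff.comp h1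

lemma fderiv_apply_single {F : Type*} [NormedAddCommGroup F] [NormedSpace ℝ F]
    {f : (Fin n → ℝ) → F} (hf : ContDiff ℝ (⊤:ℕ∞) f) (v w : Fin n → ℝ) (x : Fin n → ℝ) :
    fderiv ℝ (fun y => fderiv ℝ f y v) x w = fderiv ℝ (fderiv ℝ f) x w v := by
  have hd : DifferentiableAt ℝ (fderiv ℝ f) x :=
    ((hf.fderiv_right hTopP).differentiable hTop1 x)
  have := fderiv_clm_apply (c := fderiv ℝ f) (u := fun _ => v) hd (differentiableAt_const v)
  have h2 : (fun y => fderiv ℝ f y v) = fun y => (fderiv ℝ f y) ((fun _ => v) y) := rfl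
  rw [h2, this]
  simp

lemma pd_symm {f : (Fin n → ℝ) → ℝ} (hf : ContDiff ℝ (⊤:ℕ∞) f) (i j : Fin n) (x : Fin n → ℝ) :
    pd (pd f i) j x = pd (pd f j) i x := by
  have symm := hf.contDiffAt (x := x) |>.isSymmSndFDerivAt hTop2
  unfold pd
  rw [fderiv_apply_single hf, fderiv_apply_single hf, symm.eq]

lemma pdV_symm {f : (Fin n → ℝ) → Fin N → ℂ} (hf : ContDiff ℝ (⊤:ℕ∞) f) (i j : Fin n)
    (x : Fin n → ℝ) : pdV (pdV f i) j x = pdV (pdV f j) i x := by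
  have symm := hf.contDiffAt (x := x) |>.isSymmSndFDerivAt hTop2
  unfold pdV
  rw [fderiv_apply_single hf, fderiv_apply_single hf, symm.eq]

end Aux
section Aux2
variable {n N : ℕ} {x : Fin n → ℝ} {k : Fin n}

lemma pdV_sum {ι : Type*} (s : Finset ι) (f : ι → (Fin n → ℝ) → Fin N → ℂ)
    (hf : ∀ i ∈ s, DifferentiableAt ℝ (f i) x) :
    pdV (fun y => ∑ i ∈ s, f i y) k x = ∑ i ∈ s, pdV (f i) k x := by
  unfold pdV; rw [fderiv_fun_sum hf]; simp

lemma pdV_add (f g : (Fin n → ℝ) → Fin N → ℂ) (hf : DifferentiableAt ℝ f x)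
    (hg : DifferentiableAt ℝ g x) :
    pdV (fun y => f y + g y) k x = pdV f k x + pdV g k x := by
  unfold pdV; rw [fderiv_fun_add hf hg]; simp

lemma pdV_smulF (c : (Fin n → ℝ) → ℝ) (f : (Fin n → ℝ) → Fin N → ℂ)
    (hc : DifferentiableAt ℝ c x) (hf : DifferentiableAt ℝ f x) :
    pdV (fun y => c y • f y) k x = pd c k x • f x + c x • pdV f k x := by
  unfold pdV pd; rw [fderiv_fun_smul hc hf]; simp [add_comm]

lemma pdV_smul_const (c : (Fin n → ℝ) → ℝ) (v : Fin N → ℂ) (hc : DifferentiableAt ℝ c x) :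
    pdV (fun y => c y • v) k x = pd c k x • v := by
  unfold pdV pd; rw [fderiv_smul_const hc]; simp

lemma pdV_mulVec (M : Matrix (Fin N) (Fin N) ℂ) (f : (Fin n → ℝ) → Fin N → ℂ)
    (hf : DifferentiableAt ℝ f x) :
    pdV (fun y => M.mulVec (f y)) k x = M.mulVec (pdV f k x) := by
  classical
  set L : (Fin N → ℂ) →L[ℝ] (Fin N → ℂ) :=
    (LinearMap.toContinuousLinearMap (Matrix.mulVecLin M)).restrictScalars ℝ with hL
  have hfun : (fun y => M.mulVec (f y)) = fun y => L (f y) := rfl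
  unfold pdV
  have h2 : HasFDerivAt (fun y => L (f y)) (L.comp (fderiv ℝ f x)) x :=
    L.hasFDerivAt.comp x hf.hasFDerivAt
  rw [hfun, h2.fderiv]
  rfl

lemma pd_sum {ι : Type*} (s : Finset ι) (f : ι → (Fin n → ℝ) → ℝ)
    (hf : ∀ i ∈ s, DifferentiableAt ℝ (f i) x) :
    pd (fun y => ∑ i ∈ s, f i y) k x = ∑ i ∈ s, pd (f i) k x := by
  unfold pd; rw [fderiv_fun_sum hf]; simp

lemma pd_const_mul (c : ℝ) (f : (Fin n → ℝ) → ℝ) (hf : DifferentiableAt ℝ f x) :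
    pd (fun y => c * f y) k x = c * pd f k x := by
  unfold pd; rw [fderiv_const_mul hf c]; simp

lemma contDiff_divg {X : (Fin n → ℝ) → Fin n → ℝ} (hX : ContDiff ℝ (⊤:ℕ∞) X) :
    ContDiff ℝ (⊤:ℕ∞) (divg X) := by
  unfold divg
  exact ContDiff.sum fun k _ => contDiff_pd (contDiff_pi.mp hX k) k

end Aux2
section Cliff
variable {p n N : ℕ}

lemma etaSign_sq (i : Fin n) : etaSign p i * etaSign p i = 1 := by
  unfold etaSign; split <;> norm_num

lemma etaUp_diag (i : Fin n) : etaUp p i i = etaSign p i := by simp [etaUp]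

lemma etaUp_off {i j : Fin n} (h : i ≠ j) : etaUp p i j = 0 := by simp [etaUp, h]

variable (γ : Fin n → Matrix (Fin N) (Fin N) ℂ)
variable (hγ : ∀ i j, γ i * γ j + γ j * γ i
      = (2 * (etaUp p i j : ℝ) : ℂ) • (1 : Matrix (Fin N) (Fin N) ℂ))

include hγ

lemma cl_mul (k i : Fin n) :
    γ k * γ i = ((2 * (etaUp p k i : ℝ) : ℂ)) • (1 : Matrix (Fin N) (Fin N) ℂ) - γ i * γ k := by
  exact eq_sub_of_add_eq (hγ k i)

lemma cl_sq (i : Fin n) :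
    γ i * γ i = ((etaSign p i : ℝ) : ℂ) • (1 : Matrix (Fin N) (Fin N) ℂ) := by
  have h := hγ i i
  rw [etaUp_diag] at h
  have h2 : (2:ℂ) • (γ i * γ i) = (2:ℂ) • (((etaSign p i : ℝ) : ℂ) • (1 : Matrix (Fin N) (Fin N) ℂ)) := by
    rw [two_smul, h, smul_smul]
  exact smul_right_injective _ (two_ne_zero) h2

lemma cl_comm3 (k i j : Fin n) :
    γ k * (γ i * γ j) = ((2 * (etaUp p k i : ℝ) : ℂ)) • γ j - ((2 * (etaUp p k j : ℝ) : ℂ)) • γ i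
      + γ i * (γ j * γ k) := by
  have h1 := cl_mul γ hγ k i
  have h2 := cl_mul γ hγ k j
  calc γ k * (γ i * γ j) = (γ k * γ i) * γ j := by rw [mul_assoc]
    _ = (((2 * (etaUp p k i : ℝ) : ℂ)) • (1 : Matrix (Fin N) (Fin N) ℂ) - γ i * γ k) * γ j := by
        rw [h1]
    _ = ((2 * (etaUp p k i : ℝ) : ℂ)) • γ j - γ i * (γ k * γ j) := by
        rw [sub_mul, smul_mul_assoc, one_mul, mul_assoc]
    _ = ((2 * (etaUp p k i : ℝ) : ℂ)) • γ j
        - γ i * (((2 * (etaUp p k j : ℝ) : ℂ)) • (1 : Matrix (Fin N) (Fin N) ℂ) - γ j * γ k) := by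
        rw [h2]
    _ = _ := by rw [mul_sub, mul_smul_comm, mul_one]; abel

lemma cl_jij (i : Fin n) :
    ∑ j, ((etaSign p j : ℝ) : ℂ) • (γ j * (γ i * γ j)) = (((2:ℝ) - n : ℝ) : ℂ) • γ i := by
  classical
  have hterm : ∀ j : Fin n, j ≠ i →
      ((etaSign p j : ℝ) : ℂ) • (γ j * (γ i * γ j)) = -γ i := by
    intro j hj
    have h1 : γ j * γ i = - (γ i * γ j) := by
      have := cl_mul γ hγ j i
      rw [etaUp_off hj] at this
      rw [this]; push_cast; simp
    have : γ j * (γ i * γ j) = -(γ i * (γ j * γ j)) := by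
      rw [← mul_assoc, h1]; simp [mul_assoc]
    rw [this, cl_sq γ hγ j, mul_smul_comm, mul_one, smul_neg, smul_smul]
    rw [show ((etaSign p j : ℝ) : ℂ) * ((etaSign p j : ℝ) : ℂ) = 1 by
      rw [← Complex.ofReal_mul, etaSign_sq]; norm_num]
    simp
  have hi : ((etaSign p i : ℝ) : ℂ) • (γ i * (γ i * γ i)) = γ i := by
    rw [cl_sq γ hγ i, mul_smul_comm, mul_one, smul_smul]
    rw [show ((etaSign p i : ℝ) : ℂ) * ((etaSign p i : ℝ) : ℂ) = 1 by
      rw [← Complex.ofReal_mul, etaSign_sq]; norm_num]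
    simp
  rw [← Finset.add_sum_erase _ _ (Finset.mem_univ i), hi,
    Finset.sum_congr rfl (fun j hj => hterm j (Finset.ne_of_mem_erase hj))]
  rw [Finset.sum_const, Finset.card_erase_of_mem (Finset.mem_univ i)]
  simp only [Finset.card_univ, Fintype.card_fin, ← Nat.cast_smul_eq_nsmul ℂ]
  push_cast
  rcases Nat.eq_zero_or_pos n with h0 | h0
  · exact absurd i.pos (by omega)
  · rw [Nat.cast_sub h0]
    push_cast
    module

end Cliff
section Keys
variable {p n N : ℕ}

lemma rsmul_vec (r : ℝ) (v : Fin N → ℂ) : r • v = (r:ℂ) • v := by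
  funext a; simp [Complex.real_smul]

lemma rsmul_mat (r : ℝ) (M : Matrix (Fin N) (Fin N) ℂ) : r • M = (r:ℂ) • M := by
  ext a b; simp [Complex.real_smul]

variable (γ : Fin n → Matrix (Fin N) (Fin N) ℂ)
variable (hγ : ∀ i j, γ i * γ j + γ j * γ i
      = (2 * (etaUp p i j : ℝ) : ℂ) • (1 : Matrix (Fin N) (Fin N) ℂ))

include hγ

lemma cl_kkj (k j : Fin n) : γ k * (γ k * γ j) = ((etaSign p k : ℝ):ℂ) • γ j := by
  rw [← mul_assoc, cl_sq γ hγ, smul_mul_assoc, one_mul]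

lemma key0 (hn : 3 ≤ n) (lam : ℝ) (hlam : lam = ((n:ℝ) - 1) / (2 * (n:ℝ))) (ds : Fin n → ℝ) :
    ((1/4:ℝ) • ∑ k, ∑ i, ∑ j,
        ((1/(n:ℝ)) * (ds i * etaUp p k j - ds j * etaUp p k i)) • (γ k * (γ i * γ j)))
      + ∑ k, (lam * ds k) • γ k = 0 := by
  classical
  have hn0 : (n:ℝ) ≠ 0 := by
    have : (3:ℝ) ≤ (n:ℝ) := by exact_mod_cast hn
    linarith
  simp only [rsmul_mat]
  have hsplit : ∀ k i j : Fin n,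
      (((1/(n:ℝ)) * (ds i * etaUp p k j - ds j * etaUp p k i) : ℝ):ℂ) • (γ k * (γ i * γ j))
      = (((1/(n:ℝ)) * ds i * etaUp p k j : ℝ):ℂ) • (γ k * (γ i * γ j))
        - (((1/(n:ℝ)) * ds j * etaUp p k i : ℝ):ℂ) • (γ k * (γ i * γ j)) := by
    intro k i j
    rw [← sub_smul]
    congr 1
    push_cast
    ring
  simp only [hsplit, Finset.sum_sub_distrib]
  -- first piece
  have hS1 : ∀ k i : Fin n,
      (∑ j, (((1/(n:ℝ)) * ds i * etaUp p k j : ℝ):ℂ) • (γ k * (γ i * γ j)))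
      = (((1/(n:ℝ)) * ds i : ℝ):ℂ) • (((etaSign p k : ℝ):ℂ) • (γ k * (γ i * γ k))) := by
    intro k i
    rw [Finset.sum_eq_single k]
    · rw [etaUp_diag, smul_smul]
      congr 1
      push_cast
      ring
    · intro b _ hb
      rw [etaUp_off (Ne.symm hb)]
      push_cast
      simp
    · intro h; exact absurd (Finset.mem_univ k) h
  have hT1 : (∑ k, ∑ i, ∑ j, (((1/(n:ℝ)) * ds i * etaUp p k j : ℝ):ℂ) • (γ k * (γ i * γ j)))
      = ∑ i, (((1/(n:ℝ)) * ds i : ℝ):ℂ) • ((((2:ℝ) - n : ℝ) : ℂ) • γ i) := by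
    simp only [hS1]
    rw [Finset.sum_comm]
    refine Finset.sum_congr rfl fun i _ => ?_
    rw [← Finset.smul_sum, cl_jij γ hγ i]
  -- second piece
  have hS2 : ∀ k j : Fin n,
      (∑ i, (((1/(n:ℝ)) * ds j * etaUp p k i : ℝ):ℂ) • (γ k * (γ i * γ j)))
      = (((1/(n:ℝ)) * ds j : ℝ):ℂ) • γ j := by
    intro k j
    rw [Finset.sum_eq_single k]
    · rw [etaUp_diag, cl_kkj γ hγ, smul_smul]
      rw [show (((1/(n:ℝ)) * ds j * etaSign p k : ℝ):ℂ) * ((etaSign p k : ℝ):ℂ)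
          = (((1/(n:ℝ)) * ds j * (etaSign p k * etaSign p k) : ℝ):ℂ) by push_cast; ring]
      rw [etaSign_sq]
      norm_num
    · intro b _ hb
      rw [etaUp_off (Ne.symm hb)]
      push_cast
      simp
    · intro h; exact absurd (Finset.mem_univ k) h
  have hT2 : (∑ k, ∑ i, ∑ j, (((1/(n:ℝ)) * ds j * etaUp p k i : ℝ):ℂ) • (γ k * (γ i * γ j)))
      = ∑ j, ((n:ℂ) * (((1/(n:ℝ)) * ds j : ℝ):ℂ)) • γ j := by
    have : ∀ k : Fin n, (∑ i, ∑ j, (((1/(n:ℝ)) * ds j * etaUp p k i : ℝ):ℂ) • (γ k * (γ i * γ j)))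
        = ∑ j, (((1/(n:ℝ)) * ds j : ℝ):ℂ) • γ j := by
      intro k
      rw [Finset.sum_comm]
      exact Finset.sum_congr rfl fun j _ => hS2 k j
    simp only [this]
    rw [Finset.sum_comm]
    refine Finset.sum_congr rfl fun j _ => ?_
    rw [Finset.sum_const, Finset.card_univ, Fintype.card_fin, ← Nat.cast_smul_eq_nsmul ℂ,
      smul_smul]
  rw [hT1, hT2, smul_sub, Finset.smul_sum, Finset.smul_sum, ← Finset.sum_sub_distrib,
    ← Finset.sum_add_distrib]
  refine Finset.sum_eq_zero fun i _ => ?_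
  rw [smul_smul, smul_smul, smul_smul, ← sub_smul, ← add_smul]
  convert zero_smul ℂ (γ i)
  have hnC : ((n:ℝ):ℂ) ≠ 0 := by exact_mod_cast hn0
  rw [hlam]
  push_cast
  field_simp
  ring
end Keys
section Key1
variable {p n N : ℕ}
variable (γ : Fin n → Matrix (Fin N) (Fin N) ℂ)
variable (hγ : ∀ i j, γ i * γ j + γ j * γ i
      = (2 * (etaUp p i j : ℝ) : ℂ) • (1 : Matrix (Fin N) (Fin N) ℂ))

include hγ

lemma key1 (A : Fin n → Fin n → ℝ) (hA : ∀ i j, A j i = - A i j) (d : Fin n → Fin N → ℂ) :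
    (∑ k, ∑ i, (etaSign p i * A k i) • (γ k).mulVec (d i))
      + (1/4:ℝ) • (∑ k, ∑ i, ∑ j, A i j • ((γ k * (γ i * γ j)).mulVec (d k)))
      = (1/4:ℝ) • (∑ k, ∑ i, ∑ j, A i j • (((γ i * γ j) * γ k).mulVec (d k))) := by
  classical
  simp only [rsmul_vec]
  have hterm : ∀ k i j : Fin n,
      ((A i j : ℝ):ℂ) • ((γ k * (γ i * γ j)).mulVec (d k))
      = ((A i j : ℝ):ℂ) • (((2 * etaUp p k i : ℝ):ℂ) • (γ j).mulVec (d k))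
        - ((A i j : ℝ):ℂ) • (((2 * etaUp p k j : ℝ):ℂ) • (γ i).mulVec (d k))
        + ((A i j : ℝ):ℂ) • (((γ i * γ j) * γ k).mulVec (d k)) := by
    intro k i j
    rw [cl_comm3 γ hγ k i j, Matrix.add_mulVec, Matrix.sub_mulVec,
      Matrix.smul_mulVec, Matrix.smul_mulVec, smul_add, smul_sub, mul_assoc]
    push_cast
    norm_num
  simp only [hterm, Finset.sum_add_distrib, Finset.sum_sub_distrib]
  have hc1 : ∀ k : Fin n,
      (∑ i, ∑ j, ((A i j : ℝ):ℂ) • (((2 * etaUp p k i : ℝ):ℂ) • (γ j).mulVec (d k)))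
      = ∑ j, ((2 * etaSign p k * A k j : ℝ):ℂ) • (γ j).mulVec (d k) := by
    intro k
    rw [Finset.sum_eq_single k]
    · refine Finset.sum_congr rfl fun j _ => ?_
      rw [etaUp_diag, smul_smul]
      congr 1
      push_cast
      ring
    · intro b _ hb
      refine Finset.sum_eq_zero fun j _ => ?_
      rw [etaUp_off (Ne.symm hb)]
      push_cast
      simp
    · intro h; exact absurd (Finset.mem_univ k) h
  have hc2 : ∀ k : Fin n,
      (∑ i, ∑ j, ((A i j : ℝ):ℂ) • (((2 * etaUp p k j : ℝ):ℂ) • (γ i).mulVec (d k)))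
      = ∑ i, ((2 * etaSign p k * A i k : ℝ):ℂ) • (γ i).mulVec (d k) := by
    intro k
    refine Finset.sum_congr rfl fun i _ => ?_
    rw [Finset.sum_eq_single k]
    · rw [etaUp_diag, smul_smul]
      congr 1
      push_cast
      ring
    · intro b _ hb
      rw [etaUp_off (Ne.symm hb)]
      push_cast
      simp
    · intro h; exact absurd (Finset.mem_univ k) h
  simp only [hc1, hc2]
  have hG : ∀ k : Fin n,
      (∑ j, ((2 * etaSign p k * A k j : ℝ):ℂ) • (γ j).mulVec (d k))
      = - ∑ j, ((2 * etaSign p k * A j k : ℝ):ℂ) • (γ j).mulVec (d k) := by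
    intro k
    rw [← Finset.sum_neg_distrib]
    refine Finset.sum_congr rfl fun j _ => ?_
    rw [hA j k, ← neg_smul]
    congr 1
    push_cast
    ring
  simp only [hG]
  have hF : (∑ k, ∑ i, ((etaSign p i * A k i : ℝ):ℂ) • (γ k).mulVec (d i))
      = ∑ k, ∑ i, ((etaSign p k * A i k : ℝ):ℂ) • (γ i).mulVec (d k) := by
    rw [Finset.sum_comm]
  rw [hF]
  have hhalf : ∀ k : Fin n,
      (∑ j, ((2 * etaSign p k * A j k : ℝ):ℂ) • (γ j).mulVec (d k))
      = (2:ℂ) • ∑ i, ((etaSign p k * A i k : ℝ):ℂ) • (γ i).mulVec (d k) := by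
    intro k
    rw [Finset.smul_sum]
    refine Finset.sum_congr rfl fun i _ => ?_
    rw [smul_smul]
    congr 1
    push_cast
    ring
  simp only [hhalf, Finset.sum_neg_distrib, ← Finset.smul_sum]
  generalize (∑ k, ∑ i, ((etaSign p k * A i k : ℝ):ℂ) • (γ i).mulVec (d k)) = S2
  generalize (∑ k, ∑ i, ∑ j, ((A i j : ℝ):ℂ) • (((γ i * γ j) * γ k).mulVec (d k))) = S3
  module

end Key1
section CK
variable {p n : ℕ} {X : (Fin n → ℝ) → Fin n → ℝ} {x : Fin n → ℝ}

lemma pd_comb (a b : ℝ) (f g : (Fin n → ℝ) → ℝ) (hf : DifferentiableAt ℝ f x)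
    (hg : DifferentiableAt ℝ g x) (k : Fin n) :
    pd (fun y => a * f y + b * g y) k x = a * pd f k x + b * pd g k x := by
  unfold pd
  rw [fderiv_fun_add (hf.const_mul a) (hg.const_mul b), fderiv_const_mul hf a,
    fderiv_const_mul hg b]
  simp

lemma ck_dX (hX : ConformalKilling p X) (hn : (n:ℝ) ≠ 0) (k i : Fin n) :
    pd (fun y => X y i) k x
      = etaSign p i * ((1/2) * (etaSign p i * pd (fun y => X y i) k x
          - etaSign p k * pd (fun y => X y k) i x))
        + (divg X x / n) * (if k = i then 1 else 0) := by
  have h := hX x k i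
  have hsi := etaSign_sq (p := p) i
  have hsk := etaSign_sq (p := p) k
  by_cases hki : k = i
  · subst hki
    simp only [eq_self_iff_true, if_true] at h ⊢
    linear_combination (etaSign p k / 2) * h
      + (divg X x / (n:ℝ) - pd (fun y => X y k) k x) * hsk
  · simp only [if_neg hki] at h ⊢
    linear_combination (etaSign p i / 2) * h + (- pd (fun y => X y i) k x) * hsi

lemma ck_da (hXs : ContDiff ℝ (⊤:ℕ∞) X) (hX : ConformalKilling p X) (hn : (n:ℝ) ≠ 0)
    (k i j : Fin n) :
    pd (fun y => (1/2) * (etaSign p j * pd (fun z => X z j) i y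
        - etaSign p i * pd (fun z => X z i) j y)) k x
      = (1/(n:ℝ)) * (pd (divg X) i x * etaUp p k j - pd (divg X) j x * etaUp p k i) := by
  classical
  have hXc : ∀ m : Fin n, ContDiff ℝ (⊤:ℕ∞) (fun y => X y m) := fun m => contDiff_pi.mp hXs m
  have hpdX : ∀ a m : Fin n, ContDiff ℝ (⊤:ℕ∞) (pd (fun y => X y m) a) :=
    fun a m => contDiff_pd (hXc m) a
  have hdvg : ContDiff ℝ (⊤:ℕ∞) (divg X) := contDiff_divg hXs
  -- T a b m = ∂_a ∂_b X^m
  set T : Fin n → Fin n → Fin n → ℝ :=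
    fun a b m => pd (pd (fun y => X y m) b) a x with hT
  have hTsymm : ∀ a b m : Fin n, T a b m = T b a m := fun a b m => pd_symm (hXc m) b a x
  -- derivative of the CK identity
  have hCKd : ∀ a b c : Fin n,
      etaSign p c * T a b c + etaSign p b * T a c b
        = (2/(n:ℝ)) * etaUp p b c * pd (divg X) a x := by
    intro a b c
    have hfun : (fun y => etaSign p c * pd (fun z => X z c) b y
        + etaSign p b * pd (fun z => X z b) c y)
        = fun y => ((2/(n:ℝ)) * etaUp p b c) * divg X y := by
      funext y
      have := hX y b c
      rw [this]
      unfold etaUp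
      ring
    have h1 : pd (fun y => etaSign p c * pd (fun z => X z c) b y
        + etaSign p b * pd (fun z => X z b) c y) a x
        = etaSign p c * T a b c + etaSign p b * T a c b :=
      pd_comb _ _ _ _ ((hpdX b c).differentiable hTop1 x) ((hpdX c b).differentiable hTop1 x) a
    rw [hfun] at h1
    rw [pd_const_mul _ _ (hdvg.differentiable hTop1 x)] at h1
    linarith [h1]
  -- expand the LHS derivative
  have hL : pd (fun y => (1/2) * (etaSign p j * pd (fun z => X z j) i y
        - etaSign p i * pd (fun z => X z i) j y)) k x
      = ((1/2) * etaSign p j) * T k i j + (-((1/2) * etaSign p i)) * T k j i := by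
    have hfun : (fun y => (1/2) * (etaSign p j * pd (fun z => X z j) i y
        - etaSign p i * pd (fun z => X z i) j y))
        = fun y => ((1/2) * etaSign p j) * pd (fun z => X z j) i y
          + (-((1/2) * etaSign p i)) * pd (fun z => X z i) j y := by
      funext y; ring
    rw [hfun]
    exact pd_comb _ _ _ _ ((hpdX i j).differentiable hTop1 x)
      ((hpdX j i).differentiable hTop1 x) k
  rw [hL]
  have e1 := hCKd k i j
  have e2 := hCKd i k j
  have e3 := hCKd j i k
  have s1 := hTsymm k i j
  have s2 := hTsymm k j i
  have s3 := hTsymm i j k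
  have hup3 : etaUp p k i = etaUp p i k := by
    unfold etaUp
    by_cases h : k = i
    · subst h; simp
    · simp [h, Ne.symm h]
  linear_combination (1/2) * e2 - (1/2) * e3 + (etaSign p j / 2) * s1
    - (etaSign p i / 2) * s2 - (etaSign p k / 2) * s3
    + ((1/(n:ℝ)) * pd (divg X) j x) * hup3

end CK
section Aux3
variable {n N : ℕ} {x : Fin n → ℝ} {k : Fin n}

lemma pdV_const_smul (c : ℝ) (f : (Fin n → ℝ) → Fin N → ℂ) (hf : DifferentiableAt ℝ f x) :
    pdV (fun y => c • f y) k x = c • pdV f k x := by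
  unfold pdV
  rw [fderiv_fun_const_smul hf c]
  simp

lemma diffAt_mulVec (M : Matrix (Fin N) (Fin N) ℂ) {f : (Fin n → ℝ) → Fin N → ℂ}
    (hf : DifferentiableAt ℝ f x) :
    DifferentiableAt ℝ (fun y => M.mulVec (f y)) x := by
  set L : (Fin N → ℂ) →L[ℝ] (Fin N → ℂ) :=
    (LinearMap.toContinuousLinearMap (Matrix.mulVecLin M)).restrictScalars ℝ with hL
  exact (L.hasFDerivAt.comp x hf.hasFDerivAt).differentiableAt

lemma mulVec_sumv {ι : Type*} (s : Finset ι) (M : Matrix (Fin N) (Fin N) ℂ)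
    (v : ι → Fin N → ℂ) : M.mulVec (∑ i ∈ s, v i) = ∑ i ∈ s, M.mulVec (v i) := by
  classical
  induction s using Finset.induction with
  | empty => simp [Matrix.mulVec_zero]
  | insert _ _ h ih => rw [Finset.sum_insert h, Finset.sum_insert h, Matrix.mulVec_add, ih]

lemma sum_mulVecM {ι : Type*} (s : Finset ι) (M : ι → Matrix (Fin N) (Fin N) ℂ)
    (v : Fin N → ℂ) : (∑ i ∈ s, M i).mulVec v = ∑ i ∈ s, (M i).mulVec v := by
  classical
  induction s using Finset.induction with
  | empty => simp [Matrix.zero_mulVec]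
  | insert _ _ h ih => rw [Finset.sum_insert h, Finset.sum_insert h, Matrix.add_mulVec, ih]

lemma sum_comm3 {M : Type*} [AddCommMonoid M] {a b c : ℕ} (F : Fin a → Fin b → Fin c → M) :
    ∑ i, ∑ j, ∑ k, F i j k = ∑ k, ∑ i, ∑ j, F i j k := by
  have h1 : ∀ i, ∑ j, ∑ k, F i j k = ∑ k, ∑ j, F i j k := fun i => Finset.sum_comm
  simp only [h1]
  exact Finset.sum_comm

end Aux3

/-- For `n = p + q ≥ 3` and Clifford matrices `γⁱ` for the flat metric of
signature `(p,q)`, the flat Dirac operator `D = Σᵢ γⁱ∂ᵢ` is conformally invariant from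
spinor fields of weight `(n−1)/(2n)` to spinor fields of weight `(n+1)/(2n)`:
`D(L^{(n−1)/(2n)}_X ψ) = L^{(n+1)/(2n)}_X (Dψ)` for every conformal Killing field `X`. -/
theorem dirac_conformally_invariant (p q N : ℕ) (hn : 3 ≤ p + q)
    (γ : Fin (p + q) → Matrix (Fin N) (Fin N) ℂ)
    (hγ : ∀ i j, γ i * γ j + γ j * γ i
      = (2 * (etaUp p i j : ℝ) : ℂ) • (1 : Matrix (Fin N) (Fin N) ℂ))
    (X : (Fin (p + q) → ℝ) → Fin (p + q) → ℝ)
    (hXs : ContDiff ℝ (⊤ : ℕ∞) X) (hX : ConformalKilling p X)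
    (ψ : (Fin (p + q) → ℝ) → Fin N → ℂ) (hψ : ContDiff ℝ (⊤ : ℕ∞) ψ) :
    ∀ x, dirac γ (kosmann p γ (((p + q : ℝ) - 1) / (2 * (p + q : ℝ))) X ψ) x
      = kosmann p γ (((p + q : ℝ) + 1) / (2 * (p + q : ℝ))) X (dirac γ ψ) x := by
  intro x
  classical
  set lam : ℝ := ((p + q : ℝ) - 1) / (2 * (p + q : ℝ)) with hlam
  set lam' : ℝ := ((p + q : ℝ) + 1) / (2 * (p + q : ℝ)) with hlam'
  have hnR : ((p + q : ℕ) : ℝ) ≠ 0 := by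
    have : (3:ℝ) ≤ ((p + q : ℕ) : ℝ) := by exact_mod_cast hn
    linarith
  -- smoothness facts
  have hXc : ∀ m, ContDiff ℝ (⊤:ℕ∞) fun y => X y m := fun m => contDiff_pi.mp hXs m
  have hψd : ∀ y, DifferentiableAt ℝ ψ y := fun y => hψ.differentiable hTop1 y
  have hψk : ∀ k, ContDiff ℝ (⊤:ℕ∞) (pdV ψ k) := fun k => contDiff_pdV hψ k
  have hpdX : ∀ a m, ContDiff ℝ (⊤:ℕ∞) (pd (fun y => X y m) a) :=
    fun a m => contDiff_pd (hXc m) a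
  have hdvg : ContDiff ℝ (⊤:ℕ∞) (divg X) := contDiff_divg hXs
  set Af : Fin (p+q) → Fin (p+q) → (Fin (p+q) → ℝ) → ℝ :=
    fun i j y => (1 / 2 : ℝ) * (etaSign p j * pd (fun z => X z j) i y
      - etaSign p i * pd (fun z => X z i) j y) with hAfd
  have hAfc : ∀ i j, ContDiff ℝ (⊤:ℕ∞) (Af i j) := fun i j =>
    contDiff_const.mul ((contDiff_const.mul (hpdX i j)).sub (contDiff_const.mul (hpdX j i)))
  have hAfanti : ∀ i j, Af j i x = - Af i j x := by
    intro i j; simp only [hAfd]; ring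
  -- decomposition of the kosmann derivative
  have hkosdef : kosmann p γ lam X ψ = fun y =>
      ((∑ i, X y i • pdV ψ i y)
        + (1 / 4 : ℝ) • ∑ i, ∑ j, Af i j y • (γ i * γ j).mulVec (ψ y))
      + (lam * divg X y) • ψ y := rfl
  have hkospd : ∀ k, pdV (kosmann p γ lam X ψ) k x =
      ((∑ i, pd (fun y => X y i) k x • pdV ψ i x)
        + (∑ i, X x i • pdV (pdV ψ i) k x))
      + (((1 / 4 : ℝ) • ∑ i, ∑ j, pd (Af i j) k x • (γ i * γ j).mulVec (ψ x))
        + ((1 / 4 : ℝ) • ∑ i, ∑ j, Af i j x • (γ i * γ j).mulVec (pdV ψ k x)))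
      + (((lam * pd (divg X) k x) • ψ x) + ((lam * divg X x) • pdV ψ k x)) := by
    intro k
    rw [hkosdef]
    have d1 : DifferentiableAt ℝ (fun y => ∑ i, X y i • pdV ψ i y) x :=
      DifferentiableAt.fun_sum fun i _ =>
        ((hXc i).differentiable hTop1 x).fun_smul ((hψk i).differentiable hTop1 x)
    have d2in : DifferentiableAt ℝ
        (fun y => ∑ i, ∑ j, Af i j y • (γ i * γ j).mulVec (ψ y)) x :=
      DifferentiableAt.fun_sum fun i _ => DifferentiableAt.fun_sum fun j _ =>
        ((hAfc i j).differentiable hTop1 x).fun_smul (diffAt_mulVec _ (hψd x))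
    have d2 : DifferentiableAt ℝ
        (fun y => (1 / 4 : ℝ) • ∑ i, ∑ j, Af i j y • (γ i * γ j).mulVec (ψ y)) x :=
      d2in.fun_const_smul _
    have d3 : DifferentiableAt ℝ (fun y => (lam * divg X y) • ψ y) x :=
      ((hdvg.differentiable hTop1 x).const_mul lam).smul (hψd x)
    rw [pdV_add _ _ (d1.fun_add d2) d3, pdV_add _ _ d1 d2]
    congr 1
    congr 1
    · rw [pdV_sum _ _ (fun i _ =>
        ((hXc i).differentiable hTop1 x).fun_smul ((hψk i).differentiable hTop1 x)),
        ← Finset.sum_add_distrib]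
      exact Finset.sum_congr rfl fun i _ =>
        pdV_smulF _ _ ((hXc i).differentiable hTop1 x) ((hψk i).differentiable hTop1 x)
    · rw [pdV_const_smul _ _ d2in,
        pdV_sum _ _ (fun i _ => DifferentiableAt.fun_sum fun j _ =>
          ((hAfc i j).differentiable hTop1 x).fun_smul (diffAt_mulVec _ (hψd x)))]
      have hin : ∀ i, pdV (fun y => ∑ j, Af i j y • (γ i * γ j).mulVec (ψ y)) k x
          = ∑ j, (pd (Af i j) k x • (γ i * γ j).mulVec (ψ x)
              + Af i j x • (γ i * γ j).mulVec (pdV ψ k x)) := by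
        intro i
        rw [pdV_sum _ _ (fun j _ =>
          ((hAfc i j).differentiable hTop1 x).fun_smul (diffAt_mulVec _ (hψd x)))]
        refine Finset.sum_congr rfl fun j _ => ?_
        rw [pdV_smulF _ _ ((hAfc i j).differentiable hTop1 x) (diffAt_mulVec _ (hψd x)),
          pdV_mulVec _ _ (hψd x)]
      simp only [hin, Finset.sum_add_distrib, smul_add]
    · rw [pdV_smulF _ _ ((hdvg.differentiable hTop1 x).const_mul lam) (hψd x)]
      congr 2
      exact pd_const_mul lam (divg X) (hdvg.differentiable hTop1 x)
  -- expanded left-hand side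
  have hLHS : dirac γ (kosmann p γ lam X ψ) x
      = (∑ k, ∑ i, pd (fun y => X y i) k x • (γ k).mulVec (pdV ψ i x))
        + (∑ k, ∑ i, X x i • (γ k).mulVec (pdV (pdV ψ i) k x))
        + ((1/4:ℝ) • ∑ k, ∑ i, ∑ j, pd (Af i j) k x • (γ k * (γ i * γ j)).mulVec (ψ x))
        + ((1/4:ℝ) • ∑ k, ∑ i, ∑ j, Af i j x • (γ k * (γ i * γ j)).mulVec (pdV ψ k x))
        + (∑ k, (lam * pd (divg X) k x) • (γ k).mulVec (ψ x))
        + ((lam * divg X x) • ∑ k, (γ k).mulVec (pdV ψ k x)) := by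
    show (∑ k, (γ k).mulVec (pdV (kosmann p γ lam X ψ) k x)) = _
    simp only [hkospd, Matrix.mulVec_add, Matrix.mulVec_smul, mulVec_sumv,
      Matrix.mulVec_mulVec, Finset.sum_add_distrib, ← Finset.smul_sum]
    abel
  -- expanded right-hand side
  have hdir : ∀ i, pdV (dirac γ ψ) i x = ∑ k, (γ k).mulVec (pdV (pdV ψ k) i x) := by
    intro i
    have hd : dirac γ ψ = fun y => ∑ k, (γ k).mulVec (pdV ψ k y) := rfl
    rw [hd, pdV_sum _ _ (fun k _ => diffAt_mulVec _ ((hψk k).differentiable hTop1 x))]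
    exact Finset.sum_congr rfl fun k _ => pdV_mulVec _ _ ((hψk k).differentiable hTop1 x)
  have hRHS : kosmann p γ lam' X (dirac γ ψ) x
      = (∑ i, ∑ k, X x i • (γ k).mulVec (pdV (pdV ψ k) i x))
        + ((1/4:ℝ) • ∑ i, ∑ j, Af i j x • (γ i * γ j).mulVec (dirac γ ψ x))
        + (lam' * divg X x) • (dirac γ ψ x) := by
    show (∑ i, X x i • pdV (dirac γ ψ) i x)
        + (1 / 4 : ℝ) • (∑ i, ∑ j, Af i j x • (γ i * γ j).mulVec (dirac γ ψ x))
        + (lam' * divg X x) • (dirac γ ψ x) = _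
    simp only [hdir, Finset.smul_sum]
  have hdirx : dirac γ ψ x = ∑ k, (γ k).mulVec (pdV ψ k x) := rfl
  -- second-order terms agree
  have hsecond : (∑ k, ∑ i, X x i • (γ k).mulVec (pdV (pdV ψ i) k x))
      = ∑ i, ∑ k, X x i • (γ k).mulVec (pdV (pdV ψ k) i x) := by
    rw [Finset.sum_comm]
    exact Finset.sum_congr rfl fun i _ => Finset.sum_congr rfl fun k _ => by
      rw [pdV_symm hψ i k x]
  -- zeroth-order terms vanish
  have hck : ∀ k i j : Fin (p+q), pd (Af i j) k x
      = (1/((p+q : ℕ):ℝ)) * (pd (divg X) i x * etaUp p k j - pd (divg X) j x * etaUp p k i) := by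
    intro k i j
    simp only [hAfd]
    exact ck_da hXs hX hnR k i j
  have hzero : ((1/4:ℝ) • ∑ k, ∑ i, ∑ j, pd (Af i j) k x • (γ k * (γ i * γ j)).mulVec (ψ x))
      + (∑ k, (lam * pd (divg X) k x) • (γ k).mulVec (ψ x)) = 0 := by
    have h0 := key0 (p := p) γ hγ hn lam (by rw [hlam]; push_cast; ring)
      (fun m => pd (divg X) m x)
    have h0v := congrArg (fun M => M.mulVec (ψ x)) h0
    simp only [Matrix.add_mulVec, sum_mulVecM, Matrix.smul_mulVec,
      Matrix.zero_mulVec] at h0v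
    simp only [hck]
    exact h0v
  -- first-order terms
  have hdXx : ∀ k i : Fin (p+q), pd (fun y => X y i) k x
      = etaSign p i * Af k i x + (divg X x / ((p+q : ℕ):ℝ)) * (if k = i then 1 else 0) := by
    intro k i
    simpa only [hAfd] using ck_dX (hX := hX) hnR k i
  have hfirst : (∑ k, ∑ i, pd (fun y => X y i) k x • (γ k).mulVec (pdV ψ i x))
      + ((1/4:ℝ) • ∑ k, ∑ i, ∑ j, Af i j x • (γ k * (γ i * γ j)).mulVec (pdV ψ k x))
      + ((lam * divg X x) • ∑ k, (γ k).mulVec (pdV ψ k x))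
      = ((1/4:ℝ) • ∑ i, ∑ j, Af i j x • (γ i * γ j).mulVec (dirac γ ψ x))
        + (lam' * divg X x) • (dirac γ ψ x) := by
    rw [hdirx]
    have hsplit : (∑ k, ∑ i, pd (fun y => X y i) k x • (γ k).mulVec (pdV ψ i x))
        = (∑ k, ∑ i, (etaSign p i * Af k i x) • (γ k).mulVec (pdV ψ i x))
          + (divg X x / ((p+q : ℕ):ℝ)) • ∑ k, (γ k).mulVec (pdV ψ k x) := by
      rw [Finset.smul_sum, ← Finset.sum_add_distrib]
      refine Finset.sum_congr rfl fun k _ => ?_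
      simp only [hdXx, add_smul, Finset.sum_add_distrib]
      congr 1
      rw [Finset.sum_eq_single k]
      · simp [smul_smul]
      · intro b _ hb
        simp [Ne.symm hb]
      · intro h; exact absurd (Finset.mem_univ k) h
    have hR2 : ((1/4:ℝ) • ∑ i, ∑ j, Af i j x •
          (γ i * γ j).mulVec (∑ k, (γ k).mulVec (pdV ψ k x)))
        = (1/4:ℝ) • ∑ k, ∑ i, ∑ j, Af i j x • ((γ i * γ j) * γ k).mulVec (pdV ψ k x) := by
      congr 1
      simp only [mulVec_sumv, Matrix.mulVec_mulVec, Finset.smul_sum]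
      exact sum_comm3 _
    have hk1 := key1 (p := p) γ hγ (fun a b => Af a b x) (fun i j => hAfanti i j)
      (fun k => pdV ψ k x)
    have hs : (divg X x / ((p+q : ℕ):ℝ)) • (∑ k, (γ k).mulVec (pdV ψ k x))
        + (lam * divg X x) • (∑ k, (γ k).mulVec (pdV ψ k x))
        = (lam' * divg X x) • (∑ k, (γ k).mulVec (pdV ψ k x)) := by
      rw [← add_smul]
      congr 1
      have hpq : ((p:ℝ) + q) ≠ 0 := by push_cast at hnR; exact hnR
      rw [hlam, hlam']
      push_cast
      field_simp
      ring
    rw [hsplit, hR2, ← hs, ← hk1]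
    abel
  -- assemble
  rw [hLHS, hRHS, hsecond]
  generalize hA1 : (∑ k, ∑ i, pd (fun y => X y i) k x • (γ k).mulVec (pdV ψ i x)) = A1 at hfirst ⊢
  generalize hA2 : (∑ i, ∑ k, X x i • (γ k).mulVec (pdV (pdV ψ k) i x)) = A2
  generalize hA3 : ((1/4:ℝ) • ∑ k, ∑ i, ∑ j, pd (Af i j) k x • (γ k * (γ i * γ j)).mulVec (ψ x)) = A3 at hzero ⊢
  generalize hA4 : ((1/4:ℝ) • ∑ k, ∑ i, ∑ j, Af i j x • (γ k * (γ i * γ j)).mulVec (pdV ψ k x)) = A4 at hfirst ⊢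
  generalize hA5 : (∑ k, (lam * pd (divg X) k x) • (γ k).mulVec (ψ x)) = A5 at hzero ⊢
  generalize hA6 : ((lam * divg X x) • ∑ k, (γ k).mulVec (pdV ψ k x)) = A6 at hfirst ⊢
  generalize hB2 : ((1/4:ℝ) • ∑ i, ∑ j, Af i j x • (γ i * γ j).mulVec (dirac γ ψ x)) = B2 at hfirst ⊢
  generalize hB3 : ((lam' * divg X x) • (dirac γ ψ x)) = B3 at hfirst ⊢
  have h3 : A3 = -A5 := eq_neg_of_add_eq_zero_left hzero
  rw [h3]
  conv_rhs => rw [add_assoc, ← hfirst]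
  abel
end
end

section
/- Let n = p + q ≥ 3 and w ∈ ℝ. Let P : ℝⁿ × ℝⁿ → ℝ, (x,p) ↦ P(x,p), be polynomial in p with coefficients smooth in x, and suppose that for every conformal Killing vector field X of the flat metric η on ℝⁿ one has Σᵢ Xⁱ(x) ∂_{xⁱ}P − Σ_{i,j} (∂_{xⁱ}X^j)(x) p_j ∂_{pᵢ}P + w (Σ_k ∂_k X^k)(x) P = 0 identically. Then: if w = 2s/n for some s ∈ ℕ, there is a constant c ∈ ℝ with P(x,p) = c (Σᵢ η_{ii} pᵢ²)^s for all (x,p); and if w is not of the form 2s/n with s ∈ ℕ, then P = 0. (Classification of the scalar conformal invariants: the powers R^s of the energy R = η^{ij} pᵢ p_j.) -/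
open Matrix BigOperators

noncomputable section

/-- `P(x,p)` is polynomial in the fiber variable `p` with coefficients smooth in `x`. -/
def PolyInP {n : ℕ} (P : (Fin n → ℝ) → (Fin n → ℝ) → ℝ) : Prop :=
  ∃ (D : ℕ) (c : (Fin n → Fin (D + 1)) → (Fin n → ℝ) → ℝ),
    (∀ α, ContDiff ℝ (⊤ : ℕ∞) (c α)) ∧
    ∀ x pv, P x pv = ∑ α : Fin n → Fin (D + 1), c α x * ∏ i, pv i ^ (α i : ℕ)


namespace ConfInv
open MvPolynomial Finsupp BigOperators
variable {n : ℕ}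

lemma coeff_pderiv (f : MvPolynomial (Fin n) ℝ) (i : Fin n) (m : Fin n →₀ ℕ) :
    coeff m (pderiv i f) = ((m i : ℝ) + 1) * coeff (m + Finsupp.single i 1) f := by
  induction f using MvPolynomial.induction_on' with
  | add p q hp hq => simp [hp, hq]; ring
  | monomial s a =>
    rw [pderiv_monomial, coeff_monomial, coeff_monomial]
    by_cases hsi : s i = 0
    · have h1 : s - Finsupp.single i 1 = s := by
        ext j; rcases eq_or_ne j i with rfl | hj
        · simp [hsi]
        · simp [Finsupp.single_apply, hj.symm]
      have h2 : s ≠ m + Finsupp.single i 1 := by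
        intro h; apply absurd hsi; rw [h]; simp
      simp [h1, h2, hsi]
    · have hle : Finsupp.single i 1 ≤ s := by
        rw [Finsupp.single_le_iff]; omega
      by_cases he : s = m + Finsupp.single i 1
      · subst he
        have h1 : m + Finsupp.single i 1 - Finsupp.single i 1 = m := by simp
        simp [h1]; ring
      · have h1 : s - Finsupp.single i 1 ≠ m := by
          intro h; apply he; rw [← h, tsub_add_cancel_of_le hle]
        simp [h1, he]

lemma pderiv_comm (f : MvPolynomial (Fin n) ℝ) (i j : Fin n) :
    pderiv i (pderiv j f) = pderiv j (pderiv i f) := by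
  ext m
  rw [coeff_pderiv, coeff_pderiv, coeff_pderiv, coeff_pderiv]
  have h : m + Finsupp.single i 1 + Finsupp.single j 1
      = m + Finsupp.single j 1 + Finsupp.single i 1 := by
    rw [add_assoc, add_assoc, add_comm (Finsupp.single i 1)]
  rw [h]
  rcases eq_or_ne i j with rfl | hij
  · ring
  · have h1 : ((m + Finsupp.single j 1 : Fin n →₀ ℕ)) i = m i := by
      rw [Finsupp.add_apply, Finsupp.single_apply, if_neg hij.symm]; ring
    have h2 : ((m + Finsupp.single i 1 : Fin n →₀ ℕ)) j = m j := by
      rw [Finsupp.add_apply, Finsupp.single_apply, if_neg hij]; ring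
    rw [h1, h2]; ring

lemma degree_eq_sum (m : Fin n →₀ ℕ) : Finsupp.degree m = ∑ i : Fin n, m i := by
  rw [Finsupp.degree]
  exact Finset.sum_subset (Finset.subset_univ _) (by intro x _ hx; simpa using hx)

lemma coeff_sum_X_pderiv (f : MvPolynomial (Fin n) ℝ) (m : Fin n →₀ ℕ) :
    coeff m (∑ i, X i * pderiv i f) = ((Finsupp.degree m : ℕ) : ℝ) * coeff m f := by
  classical
  rw [coeff_sum]
  have key : ∀ i : Fin n, coeff m (X i * pderiv i f) = (m i : ℝ) * coeff m f := by
    intro i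
    rw [coeff_X_mul']
    by_cases hmi : i ∈ m.support
    · simp only [if_pos hmi]
      rw [coeff_pderiv]
      have hmi' : 1 ≤ m i := by
        rw [Finsupp.mem_support_iff] at hmi; omega
      have h1 : ((m - Finsupp.single i 1 : Fin n →₀ ℕ)) i = m i - 1 := by
        rw [Finsupp.tsub_apply, Finsupp.single_eq_same]
      have h2 : m - Finsupp.single i 1 + Finsupp.single i 1 = m := by
        rw [tsub_add_cancel_of_le]; rw [Finsupp.single_le_iff]; omega
      rw [h1, h2]
      congr 1
      push_cast [Nat.cast_sub hmi']
      ring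
    · simp only [if_neg hmi]
      rw [Finsupp.notMem_support_iff] at hmi
      simp [hmi]
  rw [Finset.sum_congr rfl (fun i _ => key i), ← Finset.sum_mul, degree_eq_sum]
  push_cast
  ring

lemma degree_add_single (m : Fin n →₀ ℕ) (i : Fin n) :
    Finsupp.degree (m + Finsupp.single i 1) = Finsupp.degree m + 1 := by
  rw [degree_eq_sum, degree_eq_sum]
  have : ∀ j : Fin n, ((m + Finsupp.single i 1 : Fin n →₀ ℕ)) j
      = m j + (if j = i then 1 else 0) := by
    intro j; rw [Finsupp.add_apply, Finsupp.single_apply]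
    simp [eq_comm]
  rw [Finset.sum_congr rfl (fun j _ => this j), Finset.sum_add_distrib]
  simp

/-- local homogeneity predicate -/
def IsHom (f : MvPolynomial (Fin n) ℝ) (d : ℕ) : Prop :=
  ∀ m : Fin n →₀ ℕ, coeff m f ≠ 0 → Finsupp.degree m = d

lemma euler {f : MvPolynomial (Fin n) ℝ} {d : ℕ} (hf : IsHom f d) :
    ∑ i, X i * pderiv i f = C (d : ℝ) * f := by
  ext m
  rw [coeff_sum_X_pderiv, coeff_C_mul]
  by_cases h : coeff m f = 0
  · simp [h]
  · rw [hf m h]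

lemma isHom_pderiv {f : MvPolynomial (Fin n) ℝ} {d : ℕ} (hf : IsHom f d) (i : Fin n)
    (m : Fin n →₀ ℕ) (hm : coeff m (pderiv i f) ≠ 0) : Finsupp.degree m + 1 = d := by
  rw [coeff_pderiv] at hm
  have h : coeff (m + Finsupp.single i 1) f ≠ 0 := by
    intro h0; rw [h0, mul_zero] at hm; exact hm rfl
  have := hf _ h
  rwa [degree_add_single] at this


/-- the metric Laplacian -/
noncomputable def Dl (a : Fin n → ℝ) (f : MvPolynomial (Fin n) ℝ) : MvPolynomial (Fin n) ℝ :=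
  ∑ k, C (a k) * pderiv k (pderiv k f)

lemma pderiv_Dl (a : Fin n → ℝ) (f : MvPolynomial (Fin n) ℝ) (j : Fin n) :
    pderiv j (Dl a f) = Dl a (pderiv j f) := by
  unfold Dl
  rw [_root_.map_sum]
  refine Finset.sum_congr rfl fun k _ => ?_
  rw [pderiv_C_mul, pderiv_comm _ j k, pderiv_comm _ j k]

lemma Dl_C_mul (a : Fin n → ℝ) (c : ℝ) (f : MvPolynomial (Fin n) ℝ) :
    Dl a (C c * f) = C c * Dl a f := by
  unfold Dl
  rw [Finset.mul_sum]
  refine Finset.sum_congr rfl fun k _ => ?_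
  rw [pderiv_C_mul, pderiv_C_mul]; ring

lemma Dl_X_mul (a : Fin n → ℝ) (i : Fin n) (ψ : MvPolynomial (Fin n) ℝ) :
    Dl a (X i * ψ) = C (2 * a i) * pderiv i ψ + X i * Dl a ψ := by
  unfold Dl
  have key : ∀ k : Fin n, C (a k) * pderiv k (pderiv k (X i * ψ))
      = (if k = i then C (2 * a i) * pderiv i ψ else 0)
        + X i * (C (a k) * pderiv k (pderiv k ψ)) := by
    intro k
    rcases eq_or_ne k i with rfl | hk
    · simp only [pderiv_mul, pderiv_X_self, one_mul, _root_.map_add, if_pos rfl]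
      rw [show (C (2 * a k) : MvPolynomial (Fin n) ℝ) = 2 * C (a k) by
        rw [_root_.map_mul, map_ofNat]]
      simp only [if_true]
      ring
    · simp only [pderiv_mul, pderiv_X_of_ne (Ne.symm hk), if_neg hk, zero_mul, zero_add,
        one_mul, _root_.map_add]
      ring
  rw [Finset.sum_congr rfl fun k _ => key k, Finset.sum_add_distrib,
    Finset.sum_ite_eq' Finset.univ i, if_pos (Finset.mem_univ i), ← Finset.mul_sum]


lemma hH_Dl (a : Fin n → ℝ) (ha : ∀ i, a i * a i = 1) (φ : MvPolynomial (Fin n) ℝ)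
    (hH : ∀ i j, C (a i) * (X i * pderiv j φ) = C (a j) * (X j * pderiv i φ)) (i j : Fin n) :
    C (a i) * (X i * pderiv j (Dl a φ)) = C (a j) * (X j * pderiv i (Dl a φ)) := by
  have hc : ∀ k : Fin n, C (a k) * C (2 * a k) = (C 2 : MvPolynomial (Fin n) ℝ) := by
    intro k
    rw [← _root_.map_mul]
    congr 1
    have := ha k
    nlinarith [ha k]
  have h := congrArg (Dl a) (hH i j)
  rw [Dl_C_mul, Dl_C_mul, Dl_X_mul, Dl_X_mul, mul_add, mul_add,
    show C (a i) * (C (2 * a i) * pderiv i (pderiv j φ))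
      = (C (a i) * C (2 * a i)) * pderiv i (pderiv j φ) by ring, hc i,
    show C (a j) * (C (2 * a j) * pderiv j (pderiv i φ))
      = (C (a j) * C (2 * a j)) * pderiv j (pderiv i φ) by ring, hc j,
    pderiv_comm φ i j, ← pderiv_Dl a φ j, ← pderiv_Dl a φ i] at h
  exact add_left_cancel h

lemma key_star (hn : 3 ≤ n) (a : Fin n → ℝ) (ha : ∀ i, a i * a i = 1)
    (φ : MvPolynomial (Fin n) ℝ) (d : ℕ) (hd : 1 ≤ d) (hhom : IsHom φ d)
    (hH : ∀ i j, C (a i) * (X i * pderiv j φ) = C (a j) * (X j * pderiv i φ)) (i : Fin n) :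
    C (a i) * (X i * Dl a φ) = C ((n : ℝ) + d - 2) * pderiv i φ := by
  have hCa : ∀ k : Fin n, C (a k) * C (a k) = (1 : MvPolynomial (Fin n) ℝ) := by
    intro k; rw [← _root_.map_mul, ha, _root_.map_one]
  have hpdhom : IsHom (pderiv i φ) (d - 1) := by
    intro m hm
    have := isHom_pderiv hhom i m hm
    omega
  have S1 : ∑ j, C (a j) * pderiv j (C (a i) * (X i * pderiv j φ))
      = pderiv i φ + C (a i) * (X i * Dl a φ) := by
    have key : ∀ j : Fin n, C (a j) * pderiv j (C (a i) * (X i * pderiv j φ))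
        = (if j = i then pderiv i φ else 0)
          + C (a i) * (X i * (C (a j) * pderiv j (pderiv j φ))) := by
      intro j
      rcases eq_or_ne j i with rfl | hj
      · rw [pderiv_C_mul, pderiv_mul, pderiv_X_self, if_pos rfl]
        linear_combination (pderiv j φ) * hCa j
      · rw [pderiv_C_mul, pderiv_mul, pderiv_X_of_ne (Ne.symm hj), if_neg hj]
        ring
    rw [Finset.sum_congr rfl fun j _ => key j, Finset.sum_add_distrib,
      Finset.sum_ite_eq' Finset.univ i, if_pos (Finset.mem_univ i)]
    congr 1
    rw [Dl, Finset.mul_sum, Finset.mul_sum]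
  have S2 : ∑ j, C (a j) * pderiv j (C (a j) * (X j * pderiv i φ))
      = C ((n : ℝ) + ((d : ℝ) - 1)) * pderiv i φ := by
    have key : ∀ j : Fin n, C (a j) * pderiv j (C (a j) * (X j * pderiv i φ))
        = pderiv i φ + X j * pderiv j (pderiv i φ) := by
      intro j
      rw [pderiv_C_mul, pderiv_mul, pderiv_X_self]
      linear_combination (pderiv i φ + X j * pderiv j (pderiv i φ)) * hCa j
    rw [Finset.sum_congr rfl fun j _ => key j, Finset.sum_add_distrib, euler hpdhom,
      Finset.sum_const, Finset.card_univ, Fintype.card_fin]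
    have hcast : ((d - 1 : ℕ) : ℝ) = (d : ℝ) - 1 := by
      have : (1:ℕ) ≤ d := hd
      push_cast [this]
      ring
    rw [hcast, _root_.map_add, add_mul, nsmul_eq_mul]
    congr 1
  have hS : ∑ j, C (a j) * pderiv j (C (a i) * (X i * pderiv j φ))
      = ∑ j, C (a j) * pderiv j (C (a j) * (X j * pderiv i φ)) :=
    Finset.sum_congr rfl fun j _ => by rw [hH i j]
  rw [S1, S2] at hS
  have : C ((n : ℝ) + ((d : ℝ) - 1)) * pderiv i φ - pderiv i φ
      = C ((n : ℝ) + (d : ℝ) - 2) * pderiv i φ := by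
    rw [show ((n : ℝ) + ((d : ℝ) - 1)) = ((n : ℝ) + (d:ℝ) - 2) + 1 by ring, _root_.map_add, _root_.map_one]
    ring
  rw [show (C (a i) * (X i * Dl a φ)) = pderiv i φ + C (a i) * (X i * Dl a φ) - pderiv i φ
    by ring, hS, this]

lemma RDl (hn : 3 ≤ n) (a : Fin n → ℝ) (ha : ∀ i, a i * a i = 1)
    (φ : MvPolynomial (Fin n) ℝ) (d : ℕ) (hd : 1 ≤ d) (hhom : IsHom φ d)
    (hH : ∀ i j, C (a i) * (X i * pderiv j φ) = C (a j) * (X j * pderiv i φ)) :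
    (∑ i, C (a i) * X i ^ 2) * Dl a φ = C (((n : ℝ) + d - 2) * d) * φ := by
  rw [Finset.sum_mul]
  have key : ∀ i : Fin n, (C (a i) * X i ^ 2) * Dl a φ
      = C ((n : ℝ) + d - 2) * (X i * pderiv i φ) := by
    intro i
    have h := key_star hn a ha φ d hd hhom hH i
    calc (C (a i) * X i ^ 2) * Dl a φ = X i * (C (a i) * (X i * Dl a φ)) := by ring
    _ = X i * (C ((n : ℝ) + d - 2) * pderiv i φ) := by rw [h]
    _ = C ((n : ℝ) + d - 2) * (X i * pderiv i φ) := by ring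
  rw [Finset.sum_congr rfl fun i _ => key i, ← Finset.mul_sum, euler hhom, ← mul_assoc,
    ← _root_.map_mul]

lemma Dl_hom (a : Fin n → ℝ) (φ : MvPolynomial (Fin n) ℝ) (d : ℕ) (hhom : IsHom φ d)
    (m : Fin n →₀ ℕ) (hm : coeff m (Dl a φ) ≠ 0) : Finsupp.degree m + 2 = d := by
  rw [Dl, coeff_sum] at hm
  obtain ⟨k, _, hk⟩ := Finset.exists_ne_zero_of_sum_ne_zero hm
  rw [coeff_C_mul] at hk
  have h1 : coeff m (pderiv k (pderiv k φ)) ≠ 0 := by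
    intro h0; rw [h0, mul_zero] at hk; exact hk rfl
  rw [coeff_pderiv] at h1
  have h2 : coeff (m + Finsupp.single k 1) (pderiv k φ) ≠ 0 := by
    intro h0; rw [h0, mul_zero] at h1; exact h1 rfl
  have := isHom_pderiv hhom k _ h2
  rw [degree_add_single] at this
  omega

lemma core (hn : 3 ≤ n) (a : Fin n → ℝ) (ha : ∀ i, a i * a i = 1) :
    ∀ (d : ℕ) (φ : MvPolynomial (Fin n) ℝ), IsHom φ d →
    (∀ i j, C (a i) * (X i * pderiv j φ) = C (a j) * (X j * pderiv i φ)) →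
    ∃ c : ℝ, φ = C c * (∑ i, C (a i) * X i ^ 2) ^ (d / 2) ∧ (Odd d → c = 0) := by
  intro d
  induction d using Nat.strong_induction_on with
  | _ d IH =>
  intro φ hhom hH
  rcases Nat.eq_zero_or_pos d with rfl | hd1
  · refine ⟨coeff 0 φ, ?_, by simp [Nat.odd_iff]⟩
    rw [Nat.zero_div, pow_zero, mul_one]
    ext m
    rcases eq_or_ne m 0 with rfl | hm
    · simp
    · rw [coeff_C, if_neg (Ne.symm hm)]
      by_contra h
      have := hhom m h
      rw [Finsupp.degree_eq_zero_iff] at this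
      exact hm this
  · -- d ≥ 1
    have hκ : ((n : ℝ) + d - 2) * d ≠ 0 := by
      have h3 : (3 : ℝ) ≤ (n : ℝ) := by exact_mod_cast hn
      have hd1' : (1 : ℝ) ≤ (d : ℝ) := by exact_mod_cast hd1
      nlinarith
    have hRD := RDl hn a ha φ d hd1 hhom hH
    have hφeq : φ = C (1 / (((n : ℝ) + d - 2) * d)) * ((∑ i, C (a i) * X i ^ 2) * Dl a φ) := by
      rw [hRD, ← mul_assoc, ← _root_.map_mul, one_div, inv_mul_cancel₀ hκ, _root_.map_one, one_mul]
    rcases eq_or_ne d 1 with rfl | hd2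
    · have hDl0 : Dl a φ = 0 := by
        ext m
        by_contra h0
        have := Dl_hom a φ 1 hhom m (by simpa using h0)
        omega
      refine ⟨0, ?_, fun _ => rfl⟩
      rw [hφeq, hDl0]
      simp
    · -- d ≥ 2
      have hd2' : 2 ≤ d := by omega
      have hDlhom : IsHom (Dl a φ) (d - 2) := by
        intro m hm
        have := Dl_hom a φ d hhom m hm
        omega
      obtain ⟨c', hc', hodd'⟩ := IH (d - 2) (by omega) (Dl a φ) hDlhom (hH_Dl a ha φ hH)
      refine ⟨c' * (1 / (((n : ℝ) + d - 2) * d)), ?_, ?_⟩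
      · rw [hφeq, hc']
        have hpow : (d - 2) / 2 + 1 = d / 2 := by omega
        rw [show (∑ i, C (a i) * X i ^ 2) * (C c' * (∑ i, C (a i) * X i ^ 2) ^ ((d-2) / 2))
            = C c' * (∑ i, C (a i) * X i ^ 2) ^ ((d-2)/2 + 1) by ring, hpow, ← mul_assoc,
          ← _root_.map_mul]
        ring_nf
      · intro hodd
        have : Odd (d - 2) := by
          rw [Nat.odd_iff] at *
          omega
        rw [hodd' this]
        ring


lemma eval_hasFDerivAt (φ : MvPolynomial (Fin n) ℝ) (v : Fin n → ℝ) :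
    HasFDerivAt (fun u : Fin n → ℝ => eval u φ)
      (∑ i, eval v (pderiv i φ) • (ContinuousLinearMap.proj i : (Fin n → ℝ) →L[ℝ] ℝ)) v := by
  induction φ using MvPolynomial.induction_on with
  | C a =>
    simp only [eval_C, pderiv_C, _root_.map_zero, zero_smul, Finset.sum_const_zero]
    exact hasFDerivAt_const a v
  | add f g hf hg =>
    have h := hf.add hg
    have heq : (fun u : Fin n → ℝ => eval u (f + g)) = fun u => eval u f + eval u g := by
      funext u; simp
    rw [heq, show (∑ j, eval v (pderiv j (f + g))
        • (ContinuousLinearMap.proj j : (Fin n → ℝ) →L[ℝ] ℝ))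
      = (∑ j, eval v (pderiv j f) • (ContinuousLinearMap.proj j : (Fin n → ℝ) →L[ℝ] ℝ))
        + ∑ j, eval v (pderiv j g) • (ContinuousLinearMap.proj j : (Fin n → ℝ) →L[ℝ] ℝ) by
      simp only [_root_.map_add, add_smul, Finset.sum_add_distrib]]
    exact h
  | mul_X f i hf =>
    have hXi : HasFDerivAt (fun u : Fin n → ℝ => u i)
        (ContinuousLinearMap.proj i : (Fin n → ℝ) →L[ℝ] ℝ) v :=
      (ContinuousLinearMap.proj (R := ℝ) (φ := fun _ : Fin n => ℝ) i).hasFDerivAt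
    have h := hf.mul hXi
    have heq : (fun u : Fin n → ℝ => eval u (f * X i)) = fun u => eval u f * u i := by
      funext u; simp
    rw [heq]
    have key : ∀ j : Fin n, eval v (pderiv j (f * X i))
          • (ContinuousLinearMap.proj j : (Fin n → ℝ) →L[ℝ] ℝ)
        = (if j = i then eval v f • (ContinuousLinearMap.proj i : (Fin n → ℝ) →L[ℝ] ℝ) else 0)
          + v i • (eval v (pderiv j f) • (ContinuousLinearMap.proj j : (Fin n → ℝ) →L[ℝ] ℝ)) := by
      intro j
      rcases eq_or_ne j i with rfl | hj
      · rw [pderiv_mul, pderiv_X_self, if_pos rfl]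
        simp only [_root_.map_add, _root_.map_mul, eval_X, _root_.map_one, mul_one]
        rw [add_smul, add_comm]
        congr 1
        rw [smul_smul, mul_comm]
      · rw [pderiv_mul, pderiv_X_of_ne (Ne.symm hj), if_neg hj]
        simp only [_root_.map_add, _root_.map_mul, eval_X, _root_.map_zero, mul_zero, add_zero, zero_add]
        rw [smul_smul, mul_comm]
    rw [show (∑ j, eval v (pderiv j (f * X i))
        • (ContinuousLinearMap.proj j : (Fin n → ℝ) →L[ℝ] ℝ))
      = eval v f • (ContinuousLinearMap.proj i : (Fin n → ℝ) →L[ℝ] ℝ)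
        + v i • ∑ j, eval v (pderiv j f)
          • (ContinuousLinearMap.proj j : (Fin n → ℝ) →L[ℝ] ℝ) by
      rw [Finset.sum_congr rfl fun j _ => key j, Finset.sum_add_distrib,
        Finset.sum_ite_eq' Finset.univ i, if_pos (Finset.mem_univ i), ← Finset.smul_sum]]
    exact h

lemma pd_eval (φ : MvPolynomial (Fin n) ℝ) (v : Fin n → ℝ) (i : Fin n) :
    pd (fun u => eval u φ) i v = eval v (pderiv i φ) := by
  rw [pd, (eval_hasFDerivAt φ v).fderiv]
  rw [ContinuousLinearMap.sum_apply]
  have key : ∀ j : Fin n, (eval v (pderiv j φ)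
        • (ContinuousLinearMap.proj j : (Fin n → ℝ) →L[ℝ] ℝ)) (Pi.single i 1)
      = if j = i then eval v (pderiv j φ) else 0 := by
    intro j
    rw [ContinuousLinearMap.smul_apply, ContinuousLinearMap.proj_apply, smul_eq_mul,
      Pi.single_apply]
    split_ifs <;> simp
  rw [Finset.sum_congr rfl fun j _ => key j, Finset.sum_ite_eq' Finset.univ i,
    if_pos (Finset.mem_univ i)]

lemma pd_const (c : ℝ) (i : Fin n) (x : Fin n → ℝ) : pd (fun _ => c) i x = 0 := by
  rw [pd, fderiv_fun_const]
  simp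

lemma pd_cproj (c : ℝ) (m i : Fin n) (x : Fin n → ℝ) :
    pd (fun y : Fin n → ℝ => c * y m) i x = if i = m then c else 0 := by
  have h : HasFDerivAt (fun y : Fin n → ℝ => c * y m)
      (c • (ContinuousLinearMap.proj m : (Fin n → ℝ) →L[ℝ] ℝ)) x :=
    ((ContinuousLinearMap.proj (R := ℝ) (φ := fun _ : Fin n => ℝ) m).hasFDerivAt).const_mul c
  rw [pd, h.fderiv, ContinuousLinearMap.smul_apply, ContinuousLinearMap.proj_apply,
    Pi.single_apply, smul_eq_mul]
  rcases eq_or_ne i m with rfl | hm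
  · simp
  · simp [hm, Ne.symm hm]

lemma sum_two {M : Type*} [AddCommMonoid M] {a b : Fin n} (hab : a ≠ b) (F G : Fin n → M) :
    ∑ j, (if j = a then F j else if j = b then G j else 0) = F a + G b := by
  have key : ∀ j : Fin n, (if j = a then F j else if j = b then G j else 0)
      = (if j = a then F j else 0) + (if j = b then G j else 0) := by
    intro j
    rcases eq_or_ne j a with rfl | hja
    · rw [if_pos rfl, if_pos rfl, if_neg hab, add_zero]
    · rw [if_neg hja, if_neg hja, zero_add]
  rw [Finset.sum_congr rfl fun j _ => key j, Finset.sum_add_distrib,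
    Finset.sum_ite_eq' Finset.univ a, Finset.sum_ite_eq' Finset.univ b,
    if_pos (Finset.mem_univ a), if_pos (Finset.mem_univ b)]


lemma pd_proj (m i : Fin n) (x : Fin n → ℝ) :
    pd (fun y : Fin n → ℝ => y m) i x = if i = m then 1 else 0 := by
  have h : HasFDerivAt (fun y : Fin n → ℝ => y m)
      (ContinuousLinearMap.proj m : (Fin n → ℝ) →L[ℝ] ℝ) x :=
    (ContinuousLinearMap.proj (R := ℝ) (φ := fun _ : Fin n => ℝ) m).hasFDerivAt
  rw [pd, h.fderiv, ContinuousLinearMap.proj_apply, Pi.single_apply]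
  rcases eq_or_ne i m with rfl | hm
  · simp
  · simp [hm, Ne.symm hm]

lemma contDiff_proj (b : Fin n) : ContDiff ℝ (⊤ : ℕ∞) (fun y : Fin n → ℝ => y b) :=
  (ContinuousLinearMap.proj (R := ℝ) (φ := fun _ : Fin n => ℝ) b).contDiff

lemma contDiff_cproj (c : ℝ) (b : Fin n) :
    ContDiff ℝ (⊤ : ℕ∞) (fun y : Fin n → ℝ => c * y b) :=
  contDiff_const.mul (contDiff_proj b)

end ConfInv

set_option maxHeartbeats 1600000

/-- classification of scalar conformal invariants of the symbol module of
weight `w` on `T*ℝⁿ`, `n = p + q ≥ 3`. If a symbol `P(x,p)`, polynomial in `p` with smooth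
coefficients, is annihilated by the natural action
`Σᵢ Xⁱ ∂_{xⁱ}P − Σ_{i,j} (∂_{xⁱ}X^j) p_j ∂_{pᵢ}P + w (div X) P` of every conformal Killing
field `X`, then `P = c·R^s` with `R = η^{ij}pᵢp_j` when `w = 2s/n`, and `P = 0` otherwise. -/
theorem scalar_conformal_invariants (p q : ℕ) (hn : 3 ≤ p + q) (w : ℝ)
    (P : (Fin (p + q) → ℝ) → (Fin (p + q) → ℝ) → ℝ) (hP : PolyInP P)
    (hinv : ∀ X : (Fin (p + q) → ℝ) → Fin (p + q) → ℝ,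
      ContDiff ℝ (⊤ : ℕ∞) X → ConformalKilling p X →
      ∀ x pv : Fin (p + q) → ℝ,
        (∑ i, X x i * pd (fun y => P y pv) i x)
        - (∑ i, ∑ j, pd (fun y => X y j) i x * pv j * pd (fun u => P x u) i pv)
        + w * divg X x * P x pv = 0) :
    (∀ s : ℕ, w = 2 * s / (p + q : ℝ) →
      ∃ c : ℝ, ∀ x pv, P x pv = c * (∑ i, etaSign p i * pv i ^ 2) ^ s) ∧
    ((¬ ∃ s : ℕ, w = 2 * s / (p + q : ℝ)) → ∀ x pv, P x pv = 0) := by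
  
  classical
  obtain ⟨D, c, hc, hrep⟩ := hP
  have hnR : ((p + q : ℕ) : ℝ) ≠ 0 := by
    have h3 : (3:ℝ) ≤ ((p+q:ℕ):ℝ) := by exact_mod_cast hn
    linarith
  have hpq : ((p:ℝ) + (q:ℝ)) ≠ 0 := by push_cast at hnR; exact hnR
  have ha : ∀ i : Fin (p+q), etaSign p i * etaSign p i = 1 := by
    intro i; unfold etaSign; split_ifs <;> norm_num
  -- Step 1: translations kill x-derivatives
  have htrans : ∀ (k : Fin (p+q)) (x pv : Fin (p+q) → ℝ), pd (fun y => P y pv) k x = 0 := by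
    intro k x pv
    have hz : ∀ x' : Fin (p+q) → ℝ,
        divg (fun _ : Fin (p+q) → ℝ => (Pi.single k 1 : Fin (p+q) → ℝ)) x' = 0 := by
      intro x'
      unfold divg
      rw [Finset.sum_congr rfl fun l _ => ConfInv.pd_const _ l x']
      simp
    have hCK : ConformalKilling p
        (fun _ : Fin (p+q) → ℝ => (Pi.single k 1 : Fin (p+q) → ℝ)) := by
      intro x' i j
      rw [hz x', ConfInv.pd_const, ConfInv.pd_const]
      ring
    have h := hinv _ contDiff_const hCK x pv
    rw [hz x] at h
    simp only [ConfInv.pd_const, zero_mul, mul_zero, Finset.sum_const_zero, sub_zero,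
      add_zero, Pi.single_apply, ite_mul, one_mul, Finset.sum_ite_eq', Finset.mem_univ,
      if_true] at h
    exact h
  -- Step 2: P is independent of x
  have hconst : ∀ x pv, P x pv = P 0 pv := by
    intro x pv
    have hfun : (fun y => P y pv)
        = fun y => ∑ α : Fin (p+q) → Fin (D+1), c α y * ∏ i, pv i ^ (α i : ℕ) :=
      funext fun y => hrep y pv
    have hdiff : Differentiable ℝ (fun y => P y pv) := by
      rw [hfun]
      apply Differentiable.fun_sum
      intro α _
      exact ((hc α).differentiable (by simp)).mul_const _
    have hfz : ∀ y, fderiv ℝ (fun y' => P y' pv) y = 0 := by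
      intro y
      ext v
      have hv : ∑ k, v k • (Pi.single k 1 : Fin (p+q) → ℝ) = v := by
        have hk : ∀ k : Fin (p+q),
            v k • (Pi.single k 1 : Fin (p+q) → ℝ) = Pi.single k (v k) := by
          intro k
          rw [← Pi.single_smul, smul_eq_mul, mul_one]
        rw [Finset.sum_congr rfl fun k _ => hk k, Finset.univ_sum_single]
      rw [ContinuousLinearMap.zero_apply, ← hv, _root_.map_sum]
      refine Finset.sum_eq_zero fun k _ => ?_
      rw [_root_.map_smul]
      have hpd0 := htrans k y pv
      rw [pd] at hpd0
      rw [hpd0, smul_zero]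
    exact is_const_of_fderiv_eq_zero hdiff hfz x 0
  -- Step 3: the fiber polynomial
  set φ : MvPolynomial (Fin (p+q)) ℝ :=
    ∑ α : Fin (p+q) → Fin (D+1), MvPolynomial.C (c α 0) * ∏ i, MvPolynomial.X i ^ (α i : ℕ)
    with hφdef
  have hPev : ∀ x pv, P x pv = MvPolynomial.eval pv φ := by
    intro x pv
    rw [hconst x pv, hrep 0 pv, hφdef, _root_.map_sum]
    refine Finset.sum_congr rfl fun α _ => ?_
    rw [_root_.map_mul, MvPolynomial.eval_C, _root_.map_prod]
    congr 1
    refine Finset.prod_congr rfl fun i _ => ?_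
    rw [_root_.map_pow, MvPolynomial.eval_X]
  have hpdp : ∀ (x pv : Fin (p+q) → ℝ) (i : Fin (p+q)),
      pd (fun u => P x u) i pv = MvPolynomial.eval pv (MvPolynomial.pderiv i φ) := by
    intro x pv i
    rw [show (fun u => P x u) = fun u => MvPolynomial.eval u φ from funext fun u => hPev x u]
    exact ConfInv.pd_eval φ pv i
  -- Step 4: dilation gives homogeneity (Euler identity)
  have hEuler : ∑ i, MvPolynomial.X i * MvPolynomial.pderiv i φ
      = MvPolynomial.C (w * ((p+q : ℕ) : ℝ)) * φ := by
    have hdv : ∀ x : Fin (p+q) → ℝ, divg (fun y : Fin (p+q) → ℝ => y) x = ((p+q : ℕ) : ℝ) := by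
      intro x
      unfold divg
      rw [Finset.sum_congr rfl fun k _ => ConfInv.pd_proj k k x]
      simp
    have hCK : ConformalKilling p (fun y : Fin (p+q) → ℝ => y) := by
      intro x i j
      rw [ConfInv.pd_proj, ConfInv.pd_proj, hdv x]
      rcases eq_or_ne i j with rfl | hij
      · simp only [eq_self_iff_true, if_true]
        field_simp
        ring
      · rw [if_neg hij, if_neg (Ne.symm hij), if_neg hij]
        ring
    refine MvPolynomial.funext fun pv => ?_
    have h := hinv (fun y => y) contDiff_id hCK 0 pv
    have h1 : (∑ i, (0 : Fin (p+q) → ℝ) i * pd (fun y => P y pv) i 0) = 0 :=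
      Finset.sum_eq_zero fun i _ => by rw [htrans i 0 pv, mul_zero]
    have h2 : (∑ i, ∑ j, pd (fun y : Fin (p+q) → ℝ => y j) i 0 * pv j
          * pd (fun u => P 0 u) i pv)
        = ∑ i, pv i * MvPolynomial.eval pv (MvPolynomial.pderiv i φ) := by
      refine Finset.sum_congr rfl fun i _ => ?_
      rw [Finset.sum_congr rfl fun j _ => by
        rw [ConfInv.pd_proj j i 0, hpdp 0 pv i]]
      simp only [ite_mul, one_mul, zero_mul]
      rw [Finset.sum_ite_eq, if_pos (Finset.mem_univ i)]
    rw [h1, h2, hdv 0, hPev 0 pv] at h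
    rw [_root_.map_sum, _root_.map_mul, MvPolynomial.eval_C]
    have h3 : ∑ i, MvPolynomial.eval pv (MvPolynomial.X i * MvPolynomial.pderiv i φ)
        = ∑ i, pv i * MvPolynomial.eval pv (MvPolynomial.pderiv i φ) :=
      Finset.sum_congr rfl fun i _ => by rw [_root_.map_mul, MvPolynomial.eval_X]
    rw [h3]
    linarith
  -- Step 5: rotations
  have hMrot : ∀ a b : Fin (p+q), a ≠ b → ∀ pv : Fin (p+q) → ℝ,
      etaSign p b * pv a * MvPolynomial.eval pv (MvPolynomial.pderiv b φ)
        = etaSign p a * pv b * MvPolynomial.eval pv (MvPolynomial.pderiv a φ) := by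
    intro a b hab pv
    set Xr : (Fin (p+q) → ℝ) → Fin (p+q) → ℝ :=
      fun y i => if i = a then (etaSign p b) * y b else if i = b then (-etaSign p a) * y a else 0 with hXrdef
    have hpdXr : ∀ (j i : Fin (p+q)) (x : Fin (p+q) → ℝ), pd (fun y => Xr y j) i x
        = if j = a then (if i = b then (etaSign p b) else 0)
          else if j = b then (if i = a then (-etaSign p a) else 0) else 0 := by
      intro j i x
      rcases eq_or_ne j a with rfl | hja
      · simp only [hXrdef, eq_self_iff_true, if_true]
        rw [ConfInv.pd_cproj]
      · rcases eq_or_ne j b with rfl | hjb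
        · simp only [hXrdef, hja, if_false, eq_self_iff_true, if_true]
          rw [ConfInv.pd_cproj]
        · simp only [hXrdef, hja, hjb, if_false]
          rw [ConfInv.pd_const]
    have hdvXr : ∀ x : Fin (p+q) → ℝ, divg Xr x = 0 := by
      intro x
      unfold divg
      rw [Finset.sum_congr rfl fun k _ => hpdXr k k x]
      refine Finset.sum_eq_zero fun k _ => ?_
      rcases eq_or_ne k a with rfl | hka
      · rw [if_pos rfl, if_neg hab]
      · rcases eq_or_ne k b with rfl | hkb
        · rw [if_neg hka, if_pos rfl, if_neg (Ne.symm hab)]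
        · rw [if_neg hka, if_neg hkb]
    have hCK : ConformalKilling p Xr := by
      intro x i j
      rw [hpdXr j i x, hpdXr i j x, hdvXr x, mul_zero, zero_mul]
      split_ifs <;> subst_vars <;> first | exact absurd rfl hab | ring
    have hsmooth : ContDiff ℝ (⊤ : ℕ∞) Xr := by
      apply contDiff_pi.mpr
      intro i
      rcases eq_or_ne i a with rfl | hia
      · simp only [hXrdef, eq_self_iff_true, if_true]
        exact ConfInv.contDiff_cproj (etaSign p b) b
      · rcases eq_or_ne i b with rfl | hib
        · simp only [hXrdef, hia, if_false, eq_self_iff_true, if_true]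
          exact ConfInv.contDiff_cproj ((-etaSign p a)) a
        · simp only [hXrdef, hia, hib, if_false]
          exact contDiff_const
    have h := hinv Xr hsmooth hCK 0 pv
    have h1 : (∑ i, Xr 0 i * pd (fun y => P y pv) i 0) = 0 :=
      Finset.sum_eq_zero fun i _ => by rw [htrans i 0 pv, mul_zero]
    have hinner : ∀ i : Fin (p+q),
        (∑ j, pd (fun y => Xr y j) i 0 * pv j * pd (fun u => P 0 u) i pv)
        = if i = b then (etaSign p b) * pv a * MvPolynomial.eval pv (MvPolynomial.pderiv b φ)
          else if i = a then (-etaSign p a) * pv b * MvPolynomial.eval pv (MvPolynomial.pderiv a φ)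
          else 0 := by
      intro i
      rw [Finset.sum_congr rfl fun j _ => by rw [hpdXr j i 0, hpdp 0 pv i]]
      simp only [ite_mul, zero_mul]
      rw [ConfInv.sum_two hab]
      rcases eq_or_ne i b with rfl | hib
      · have hia : i ≠ a := Ne.symm hab
        simp [hia]
      · rcases eq_or_ne i a with rfl | hia
        · simp [hib]
        · simp [hia, hib]
    have h2 : (∑ i, ∑ j, pd (fun y => Xr y j) i 0 * pv j * pd (fun u => P 0 u) i pv)
        = (etaSign p b) * pv a * MvPolynomial.eval pv (MvPolynomial.pderiv b φ)
          + (-etaSign p a) * pv b * MvPolynomial.eval pv (MvPolynomial.pderiv a φ) := by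
      rw [Finset.sum_congr rfl fun i _ => hinner i,
        ConfInv.sum_two (Ne.symm hab)]
    rw [h1, h2, hdvXr 0] at h
    simp only [mul_zero, zero_mul, zero_sub, add_zero] at h
    linarith
  have hH : ∀ i j : Fin (p+q),
      MvPolynomial.C (etaSign p i) * (MvPolynomial.X i * MvPolynomial.pderiv j φ)
        = MvPolynomial.C (etaSign p j) * (MvPolynomial.X j * MvPolynomial.pderiv i φ) := by
    intro i j
    rcases eq_or_ne i j with rfl | hij
    · rfl
    have M : MvPolynomial.C (etaSign p j) * (MvPolynomial.X i * MvPolynomial.pderiv j φ)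
        = MvPolynomial.C (etaSign p i) * (MvPolynomial.X j * MvPolynomial.pderiv i φ) := by
      refine MvPolynomial.funext fun pv => ?_
      have := hMrot i j hij pv
      simp only [_root_.map_mul, MvPolynomial.eval_C, MvPolynomial.eval_X]
      rw [← mul_assoc, ← mul_assoc]
      exact this
    calc MvPolynomial.C (etaSign p i) * (MvPolynomial.X i * MvPolynomial.pderiv j φ)
        = MvPolynomial.C (etaSign p i * etaSign p j)
          * (MvPolynomial.C (etaSign p j) * (MvPolynomial.X i * MvPolynomial.pderiv j φ)) := by
          rw [show (MvPolynomial.C (etaSign p i) : MvPolynomial (Fin (p+q)) ℝ)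
              = MvPolynomial.C (etaSign p i * etaSign p j) * MvPolynomial.C (etaSign p j) from by
            rw [← _root_.map_mul, mul_assoc, ha j, mul_one], mul_assoc]
      _ = MvPolynomial.C (etaSign p i * etaSign p j)
          * (MvPolynomial.C (etaSign p i) * (MvPolynomial.X j * MvPolynomial.pderiv i φ)) := by
          rw [M]
      _ = MvPolynomial.C (etaSign p j) * (MvPolynomial.X j * MvPolynomial.pderiv i φ) := by
          rw [← mul_assoc, ← _root_.map_mul, show etaSign p i * etaSign p j * etaSign p i
              = etaSign p j from by
            rw [mul_comm (etaSign p i) (etaSign p j), mul_assoc, ha i, mul_one]]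
  -- Conclusions
  constructor
  · intro s hw
    have hwn : w * ((p+q:ℕ):ℝ) = 2 * s := by
      rw [hw]
      push_cast
      field_simp
    have hhom : ConfInv.IsHom φ (2*s) := by
      intro m hm
      have hco := congrArg (MvPolynomial.coeff m) hEuler
      rw [ConfInv.coeff_sum_X_pderiv, MvPolynomial.coeff_C_mul, hwn] at hco
      have hdm : ((Finsupp.degree m : ℕ) : ℝ) = 2*s := mul_right_cancel₀ hm hco
      exact_mod_cast hdm
    obtain ⟨c₀, hc₀, _⟩ := ConfInv.core hn (etaSign p) ha (2*s) φ hhom hH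
    refine ⟨c₀, fun x pv => ?_⟩
    rw [hPev x pv, hc₀, show (2*s)/2 = s by omega, _root_.map_mul, MvPolynomial.eval_C,
      _root_.map_pow, _root_.map_sum]
    congr 2
    refine Finset.sum_congr rfl fun i _ => ?_
    rw [_root_.map_mul, MvPolynomial.eval_C, _root_.map_pow, MvPolynomial.eval_X]
  · intro hns x pv
    rw [hPev x pv]
    suffices hz : φ = 0 by rw [hz, _root_.map_zero]
    by_cases hD : ∃ d : ℕ, ((d:ℕ):ℝ) = w * ((p+q:ℕ):ℝ)
    · obtain ⟨d, hd⟩ := hD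
      have hhom : ConfInv.IsHom φ d := by
        intro m hm
        have hco := congrArg (MvPolynomial.coeff m) hEuler
        rw [ConfInv.coeff_sum_X_pderiv, MvPolynomial.coeff_C_mul, ← hd] at hco
        have hdm : ((Finsupp.degree m : ℕ) : ℝ) = d := mul_right_cancel₀ hm hco
        exact_mod_cast hdm
      have hodd : Odd d := by
        rcases Nat.even_or_odd d with he | ho
        · obtain ⟨s, hs⟩ := he
          exfalso
          apply hns
          refine ⟨s, ?_⟩
          have hd2 : (d:ℝ) = 2 * s := by rw [hs]; push_cast; ring
        
          rw [hd2] at hd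
          push_cast at hd
          field_simp
          linarith
        · exact ho
      obtain ⟨c₀, hc₀, hcz⟩ := ConfInv.core hn (etaSign p) ha d φ hhom hH
      rw [hc₀, hcz hodd, _root_.map_zero, zero_mul]
    · refine (MvPolynomial.eq_zero_iff.mpr fun m => ?_)
      by_contra hm
      have hco := congrArg (MvPolynomial.coeff m) hEuler
      rw [ConfInv.coeff_sum_X_pderiv, MvPolynomial.coeff_C_mul] at hco
      exact hD ⟨Finsupp.degree m, mul_right_cancel₀ hm hco⟩
end
end
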